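/- arXiv:0705.1646 — 5 statements merged into one kernel-verified Lean document; each statement's English description precedes it below -/
import Mathlib

section
/- Let V be a finite-dimensional real inner product space with dim V = ℓ ≥ 1, and let Φ ⊆ V be a reduced crystallographic root system spanning V which is irreducible. Fix a base Δ of Φ with associated set Φ⁺ of positive roots. Then for every proper subset Σ ⊊ Δ, the number of positive roots α ∈ Φ⁺ that do not lie in the linear span of Σ is at least ℓ. -/
open scoped RealInnerProductSpace

attribute [local instance] Classical.propDecidable

/-- For an irreducible reduced crystallographic root system `Φ` spanning an
`ℓ`-dimensional real inner product space `V`, with base `Δ` and positive system `Φ⁺`, and any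
proper subset `S ⊊ Δ`, the number of positive roots not lying in the span of `S` is at least
`ℓ`. -/
theorem stmt_0 {V : Type*} [NormedAddCommGroup V] [InnerProductSpace ℝ V]
    [FiniteDimensional ℝ V]
    (ℓ : ℕ) (hℓ : 1 ≤ ℓ) (hdim : Module.finrank ℝ V = ℓ)
    (Φ : Finset V)
    (hspan : Submodule.span ℝ (Φ : Set V) = ⊤)
    (h0 : (0 : V) ∉ Φ)
    (hrefl : ∀ α ∈ Φ, ∀ β ∈ Φ, β - (2 * ⟪β, α⟫ / ⟪α, α⟫) • α ∈ Φ)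
    (hint : ∀ α ∈ Φ, ∀ β ∈ Φ, ∃ n : ℤ, 2 * ⟪β, α⟫ / ⟪α, α⟫ = (n : ℝ))
    (hred : ∀ α ∈ Φ, ∀ t : ℝ, t • α ∈ Φ → t = 1 ∨ t = -1)
    (hirr : ∀ Φ₁ Φ₂ : Finset V, Φ₁.Nonempty → Φ₂.Nonempty →
      Φ₁ ∪ Φ₂ = Φ → Disjoint Φ₁ Φ₂ →
      ¬ (∀ α ∈ Φ₁, ∀ β ∈ Φ₂, ⟪α, β⟫ = 0))
    (Δ : Finset V) (hΔΦ : Δ ⊆ Φ)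
    (hind : LinearIndependent ℝ (fun a : {x : V // x ∈ Δ} => (a : V)))
    (hΔspan : Submodule.span ℝ (Δ : Set V) = ⊤)
    (hbase : ∀ β ∈ Φ, ∃ c : V → ℤ, β = ∑ α ∈ Δ, (c α : ℝ) • α ∧
      ((∀ α ∈ Δ, 0 ≤ c α) ∨ (∀ α ∈ Δ, c α ≤ 0)))
    (Φpos : Finset V)
    (hΦpos : ∀ β, β ∈ Φpos ↔ β ∈ Φ ∧ ∃ c : V → ℤ,
      β = ∑ α ∈ Δ, (c α : ℝ) • α ∧ ∀ α ∈ Δ, 0 ≤ c α)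
    (S : Finset V) (hS : S ⊆ Δ) (hSne : S ≠ Δ) :
    ℓ ≤ (Φpos.filter (fun β => β ∉ Submodule.span ℝ (S : Set V))).card := by
  classical
  -- basis and coordinates
  let b : Module.Basis {x : V // x ∈ Δ} ℝ V :=
    Module.Basis.mk hind (by rw [show (Set.range fun a : {x : V // x ∈ Δ} => (a : V)) = (Δ : Set V)
      from Subtype.range_coe, hΔspan])
  have hb : ∀ (δ : V) (h : δ ∈ Δ), b ⟨δ, h⟩ = δ := fun δ h => Module.Basis.mk_apply _ _ _
  set r : V → V → ℝ := fun v δ => if h : δ ∈ Δ then b.repr v ⟨δ, h⟩ else 0 with hr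
  have lemA : ∀ (f : V → ℝ), ∀ δ ∈ Δ, r (∑ α ∈ Δ, f α • α) δ = f δ := by
    intro f δ hδ
    have h1 : ∑ α ∈ Δ, f α • α = ∑ a : {x : V // x ∈ Δ}, f a • b a := by
      rw [Finset.univ_eq_attach]
      rw [← Finset.sum_attach Δ (fun α => f α • α)]
      exact Finset.sum_congr rfl (fun a _ => by rw [hb a a.2])
    rw [h1]
    simp only [hr, dif_pos hδ, b.repr_sum_self]
  have lemB : ∀ v : V, ∑ α ∈ Δ, r v α • α = v := by
    intro v
    rw [← Finset.sum_attach Δ (fun α => r v α • α)]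
    have : ∀ a : {x : V // x ∈ Δ}, r v a • (a : V) = b.repr v a • b a := by
      intro a
      rw [hb a a.2]
      simp only [hr, dif_pos a.2]
    rw [Finset.sum_congr rfl (fun a _ => this a)]
    rw [← Finset.univ_eq_attach]
    exact b.sum_repr v
  have rsub : ∀ u v δ, r (u - v) δ = r u δ - r v δ := by
    intro u v δ
    simp only [hr]
    by_cases h : δ ∈ Δ
    · simp [dif_pos h]
    · simp [dif_neg h]
  have rneg : ∀ v δ, r (-v) δ = - r v δ := by
    intro v δ
    simp only [hr]
    by_cases h : δ ∈ Δ
    · simp [dif_pos h]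
    · simp [dif_neg h]
  have radd : ∀ u v δ, r (u + v) δ = r u δ + r v δ := by
    intro u v δ
    simp only [hr]
    by_cases h : δ ∈ Δ
    · simp [dif_pos h]
    · simp [dif_neg h]
  have rΔ : ∀ τ ∈ Δ, ∀ δ ∈ Δ, r τ δ = if δ = τ then 1 else 0 := by
    intro τ hτ δ hδ
    have h1 : ∑ α ∈ Δ, (if α = τ then (1:ℝ) else 0) • α = τ := by
      simp [ite_smul, hτ]
    have := lemA (fun α => if α = τ then (1:ℝ) else 0) δ hδ
    rw [h1] at this
    exact this
  have hzero : ∀ v : V, (∀ δ ∈ Δ, r v δ = 0) → v = 0 := by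
    intro v hv
    rw [← lemB v]
    exact Finset.sum_eq_zero (fun δ hδ => by rw [hv δ hδ, zero_smul])
  -- basic root facts
  have hnz : ∀ β ∈ Φ, β ≠ 0 := fun β hβ h => h0 (h ▸ hβ)
  have hip : ∀ β ∈ Φ, (0:ℝ) < ⟪β, β⟫ := by
    intro β hβ
    rcases lt_or_eq_of_le (real_inner_self_nonneg (x := β)) with h | h
    · exact h
    · exact absurd (inner_self_eq_zero.mp h.symm) (hnz β hβ)
  have hnegmem : ∀ β ∈ Φ, -β ∈ Φ := by
    intro β hβ
    have h2 : 2 * ⟪β, β⟫ / ⟪β, β⟫ = (2:ℝ) := by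
      rw [mul_div_assoc, div_self (hip β hβ).ne', mul_one]
    have := hrefl β hβ β hβ
    rw [h2] at this
    have h3 : β - (2:ℝ) • β = -β := by
      rw [two_smul]; abel
    rwa [h3] at this
  have ΦposΦ : ∀ β ∈ Φpos, β ∈ Φ := fun β hβ => ((hΦpos β).mp hβ).1
  have hposcoord : ∀ β ∈ Φpos, ∀ δ ∈ Δ, 0 ≤ r β δ := by
    intro β hβ δ hδ
    obtain ⟨_, c, hc, hcpos⟩ := (hΦpos β).mp hβ
    have : r β δ = (c δ : ℝ) := by rw [hc]; exact lemA _ δ hδ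
    rw [this]
    exact_mod_cast hcpos δ hδ
  have hcoordInt : ∀ β ∈ Φ, ∀ δ ∈ Δ, ∃ k : ℤ, r β δ = (k:ℝ) := by
    intro β hβ δ hδ
    obtain ⟨c, hc, _⟩ := hbase β hβ
    exact ⟨c δ, by rw [hc]; exact lemA _ δ hδ⟩
  have hbaseR : ∀ β ∈ Φ, (∀ δ ∈ Δ, 0 ≤ r β δ) ∨ (∀ δ ∈ Δ, r β δ ≤ 0) := by
    intro β hβ
    obtain ⟨c, hc, hsign⟩ := hbase β hβ
    have hcr : ∀ δ ∈ Δ, r β δ = (c δ : ℝ) := fun δ hδ => by rw [hc]; exact lemA _ δ hδ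
    rcases hsign with h | h
    · left; intro δ hδ; rw [hcr δ hδ]; exact_mod_cast h δ hδ
    · right; intro δ hδ; rw [hcr δ hδ]; exact_mod_cast h δ hδ
  have hposiff : ∀ β ∈ Φ, (∀ δ ∈ Δ, 0 ≤ r β δ) → β ∈ Φpos := by
    intro β hβ hcoord
    obtain ⟨c, hc, _⟩ := hbase β hβ
    refine (hΦpos β).mpr ⟨hβ, c, hc, fun δ hδ => ?_⟩
    have : r β δ = (c δ : ℝ) := by rw [hc]; exact lemA _ δ hδ
    have := hcoord δ hδ
    rw [‹r β δ = (c δ : ℝ)›] at this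
    exact_mod_cast this
  have hdich : ∀ β ∈ Φ, β ∈ Φpos ∨ -β ∈ Φpos := by
    intro β hβ
    rcases hbaseR β hβ with h | h
    · exact Or.inl (hposiff β hβ h)
    · refine Or.inr (hposiff (-β) (hnegmem β hβ) (fun δ hδ => ?_))
      rw [rneg]
      linarith [h δ hδ]
  have hposof : ∀ β ∈ Φ, ∀ δ ∈ Δ, 0 < r β δ → β ∈ Φpos := by
    intro β hβ δ hδ hpos
    rcases hbaseR β hβ with h | h
    · exact hposiff β hβ h
    · linarith [h δ hδ]
  -- membership in span of a subset of Δ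
  have hspanT : ∀ T : Finset V, T ⊆ Δ → ∀ v : V,
      (v ∈ Submodule.span ℝ (T : Set V) ↔ ∀ δ ∈ Δ, δ ∉ T → r v δ = 0) := by
    intro T hTΔ v
    constructor
    · intro hv δ hδ hδT
      obtain ⟨f, -, hf⟩ := Submodule.mem_span_finset.mp hv
      have hsum : ∑ α ∈ Δ, (if α ∈ T then f α else 0) • α = v := by
        rw [← hf]
        rw [← Finset.sum_subset hTΔ (fun x _ hxT => by rw [if_neg hxT, zero_smul])]
        exact Finset.sum_congr rfl (fun x hx => by rw [if_pos hx])
      have h2 := lemA (fun α => if α ∈ T then f α else 0) δ hδ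
      rw [hsum] at h2
      rw [h2]
      simp [hδT]
    · intro hv
      have hTv : ∑ α ∈ T, r v α • α = v :=
        (Finset.sum_subset hTΔ (fun x hx hxT => by rw [hv x hx hxT, zero_smul])).trans (lemB v)
      rw [← hTv]
      exact Submodule.sum_mem _ (fun α hα =>
        Submodule.smul_mem _ _ (Submodule.subset_span hα))
  -- simple roots are positive
  have hsimplepos : ∀ δ ∈ Δ, δ ∈ Φpos := by
    intro δ hδ
    refine hposof δ (hΔΦ hδ) δ hδ ?_
    rw [rΔ δ hδ δ hδ, if_pos rfl]
    norm_num
  -- L1 : difference of non-proportional roots with positive inner product is a root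
  have L1 : ∀ α ∈ Φ, ∀ β ∈ Φ, α ≠ β → α ≠ -β → 0 < ⟪α, β⟫ → α - β ∈ Φ := by
    intro α hα β hβ hne hne' hpos
    have hindep : ∀ t : ℝ, α ≠ t • β := by
      intro t ht
      rcases hred β hβ t (ht ▸ hα) with h | h
      · rw [h, one_smul] at ht; exact hne ht
      · rw [h, neg_one_smul] at ht; exact hne' ht
    obtain ⟨m, hm⟩ := hint β hβ α hα
    obtain ⟨n, hn⟩ := hint α hα β hβ
    have hαα := hip α hα
    have hββ := hip β hβ
    have hm1 : 1 ≤ m := by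
      have : (0:ℝ) < (m:ℝ) := by rw [← hm]; positivity
      exact_mod_cast this
    have hn1 : 1 ≤ n := by
      have : (0:ℝ) < (n:ℝ) := by
        rw [← hn, real_inner_comm]; positivity
      exact_mod_cast this
    -- strict Cauchy-Schwarz
    have hCS : ⟪α, β⟫ * ⟪α, β⟫ < ⟪α, α⟫ * ⟪β, β⟫ := by
      set v := ⟪β, β⟫ • α - ⟪α, β⟫ • β with hv
      have hv0 : v ≠ 0 := by
        intro h
        apply hindep ((⟪β, β⟫)⁻¹ * ⟪α, β⟫)
        have h1 : ⟪β, β⟫ • α = ⟪α, β⟫ • β := by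
          have := sub_eq_zero.mp (hv ▸ h)
          exact this
        have h2 : (⟪β, β⟫)⁻¹ • (⟪β, β⟫ • α) = (⟪β, β⟫)⁻¹ • (⟪α, β⟫ • β) := by rw [h1]
        rw [smul_smul, smul_smul, inv_mul_cancel₀ hββ.ne', one_smul] at h2
        exact h2
      have hvv : (0:ℝ) < ⟪v, v⟫ := by
        rcases lt_or_eq_of_le (real_inner_self_nonneg (x := v)) with h | h
        · exact h
        · exact absurd (inner_self_eq_zero.mp h.symm) hv0
      have hexp : ⟪v, v⟫ = ⟪β,β⟫ * ⟪β,β⟫ * ⟪α,α⟫ - ⟪β,β⟫ * (⟪α,β⟫ * ⟪α,β⟫) := by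
        simp only [hv, inner_sub_left, inner_sub_right, real_inner_smul_left,
          real_inner_smul_right, real_inner_comm β α]
        ring
      rw [hexp] at hvv
      nlinarith [hββ]
    have hmn4 : (m:ℝ) * (n:ℝ) < 4 := by
      rw [← hm, ← hn, real_inner_comm α β]
      rw [div_mul_div_comm]
      rw [div_lt_iff₀ (by positivity)]
      nlinarith [hCS, hαα, hββ]
    have hmn : m = 1 ∨ n = 1 := by
      by_contra h
      push_neg at h
      have hm2 : 2 ≤ m := by omega
      have hn2 : 2 ≤ n := by omega
      have : (4:ℝ) ≤ (m:ℝ) * (n:ℝ) := by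
        have : (2:ℝ) ≤ (m:ℝ) := by exact_mod_cast hm2
        have : (2:ℝ) ≤ (n:ℝ) := by exact_mod_cast hn2
        nlinarith [show (2:ℝ) ≤ (m:ℝ) from by exact_mod_cast hm2]
      linarith
    rcases hmn with h | h
    · have := hrefl β hβ α hα
      rw [hm, h] at this
      simpa using this
    · have := hrefl α hα β hβ
      rw [hn, h] at this
      simp only [Int.cast_one, one_smul] at this
      have := hnegmem _ this
      rwa [neg_sub] at this
  -- L2 : distinct simple roots make obtuse angles
  have L2 : ∀ α ∈ Δ, ∀ β ∈ Δ, α ≠ β → ⟪α, β⟫ ≤ 0 := by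
    intro α hα β hβ hne
    by_contra h
    push_neg at h
    have hne' : α ≠ -β := by
      intro hc
      have h1 := rΔ α hα α hα
      rw [if_pos rfl] at h1
      have h2 : r α α = - r β α := by rw [hc, rneg]
      rw [rΔ β hβ α hα, if_neg hne] at h2
      rw [h1] at h2
      norm_num at h2
    have hαβ : α - β ∈ Φ := L1 α (hΔΦ hα) β (hΔΦ hβ) hne hne' h
    have hco : ∀ δ ∈ Δ, r (α - β) δ = (if δ = α then 1 else 0) - (if δ = β then 1 else 0) := by
      intro δ hδ
      rw [rsub, rΔ α hα δ hδ, rΔ β hβ δ hδ]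
    rcases hdich _ hαβ with hp | hp
    · have := hposcoord _ hp β hβ
      rw [hco β hβ, if_neg (fun hc => hne hc.symm), if_pos rfl] at this
      norm_num at this
    · have := hposcoord _ hp α hα
      rw [rneg, hco α hα, if_pos rfl, if_neg (fun hc => hne hc)] at this
      norm_num at this
  -- find a simple root with positive coefficient and positive inner product
  have findτ : ∀ β ∈ Φpos, ∃ τ ∈ Δ, 0 < r β τ ∧ 0 < ⟪β, τ⟫ := by
    intro β hβ
    have hβΦ := ΦposΦ β hβ
    have hsum : ⟪β, β⟫ = ∑ τ ∈ Δ, r β τ * ⟪τ, β⟫ := by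
      have h := sum_inner (𝕜 := ℝ) Δ (fun α => r β α • α) β
      rw [lemB β] at h
      simp only [real_inner_smul_left] at h
      exact h
    have hterm : ∃ τ ∈ Δ, 0 < r β τ * ⟪τ, β⟫ := by
      by_contra hc
      push_neg at hc
      have : ⟪β, β⟫ ≤ 0 := by
        rw [hsum]
        exact Finset.sum_nonpos hc
      linarith [hip β hβΦ]
    obtain ⟨τ, hτ, hτpos⟩ := hterm
    have h1 : 0 < r β τ := by
      rcases lt_or_eq_of_le (hposcoord β hβ τ hτ) with h | h
      · exact h
      · rw [← h] at hτpos; norm_num at hτpos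
    refine ⟨τ, hτ, h1, ?_⟩
    rw [real_inner_comm]
    nlinarith [hτpos, h1]
  -- height of a positive root
  have hht : ∀ β ∈ Φpos, ∃ n : ℕ, ∑ δ ∈ Δ, r β δ = (n:ℝ) := by
    intro β hβ
    obtain ⟨_, c, hc, hcpos⟩ := (hΦpos β).mp hβ
    have hcr : ∀ δ ∈ Δ, r β δ = (c δ : ℝ) := fun δ hδ => by rw [hc]; exact lemA _ δ hδ
    refine ⟨(∑ δ ∈ Δ, c δ).toNat, ?_⟩
    have hnn : 0 ≤ ∑ δ ∈ Δ, c δ := Finset.sum_nonneg hcpos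
    rw [Finset.sum_congr rfl hcr,
      show (((∑ δ ∈ Δ, c δ).toNat : ℕ) : ℝ) = ((∑ δ ∈ Δ, c δ : ℤ) : ℝ) by
        exact_mod_cast Int.toNat_of_nonneg hnn]
    push_cast
    rfl
  -- the splitting lemma
  have split : ∀ (P Q : V → Prop), (∀ δ ∈ Δ, P δ ∨ Q δ) →
      (∀ τ ∈ Δ, ∀ σ ∈ Δ, P τ → Q σ → ⟪τ, σ⟫ = 0) →
      ∀ β ∈ Φpos, (∀ δ ∈ Δ, Q δ → r β δ = 0) ∨ (∀ δ ∈ Δ, P δ → r β δ = 0) := by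
    suffices H : ∀ n : ℕ, ∀ (P Q : V → Prop), (∀ δ ∈ Δ, P δ ∨ Q δ) →
        (∀ τ ∈ Δ, ∀ σ ∈ Δ, P τ → Q σ → ⟪τ, σ⟫ = 0) →
        ∀ β ∈ Φpos, ∑ δ ∈ Δ, r β δ = (n:ℝ) →
        (∀ δ ∈ Δ, Q δ → r β δ = 0) ∨ (∀ δ ∈ Δ, P δ → r β δ = 0) by
      intro P Q hPQ horth β hβ
      obtain ⟨n, hn⟩ := hht β hβ
      exact H n P Q hPQ horth β hβ hn
    intro n
    induction n using Nat.strong_induction_on with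
    | _ n IH =>
      have core : ∀ (P Q : V → Prop), (∀ δ ∈ Δ, P δ ∨ Q δ) →
          (∀ τ ∈ Δ, ∀ σ ∈ Δ, P τ → Q σ → ⟪τ, σ⟫ = 0) →
          ∀ β ∈ Φpos, ∑ δ ∈ Δ, r β δ = (n:ℝ) →
          ∀ τ ∈ Δ, P τ → 0 < r β τ → 0 < ⟪β, τ⟫ →
          (∀ δ ∈ Δ, Q δ → r β δ = 0) ∨ (∀ δ ∈ Δ, P δ → r β δ = 0) := by
        intro P Q hPQ horth β hβ hn τ hτ hPτ hrτ hiτ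
        have hβΦ := ΦposΦ β hβ
        have hτΦ := hΔΦ hτ
        have hdisj : ∀ δ ∈ Δ, P δ → Q δ → False := by
          intro δ hδ hP hQ
          have := horth δ hδ δ hδ hP hQ
          exact absurd this (hip δ (hΔΦ hδ)).ne'
        by_cases hβτ : β = τ
        · left
          intro δ hδ hQδ
          have hne : δ ≠ τ := fun hc => hdisj δ hδ (hc ▸ hPτ) hQδ
          rw [hβτ, rΔ τ hτ δ hδ, if_neg hne]
        · have hβnτ : β ≠ -τ := by
            intro hc
            have h1 : r β τ = -1 := by
              rw [hc, rneg, rΔ τ hτ τ hτ, if_pos rfl]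
            rw [h1] at hrτ; norm_num at hrτ
          have hγΦ : β - τ ∈ Φ := L1 β hβΦ τ hτΦ hβτ hβnτ hiτ
          have hγco : ∀ δ ∈ Δ, r (β - τ) δ = r β δ - (if δ = τ then 1 else 0) := by
            intro δ hδ
            rw [rsub, rΔ τ hτ δ hδ]
          -- β - τ is positive
          have hγpos : β - τ ∈ Φpos := by
            rcases hdich _ hγΦ with h | h
            · exact h
            · exfalso
              have hle : ∀ δ ∈ Δ, r (β - τ) δ ≤ 0 := by
                intro δ hδ
                have := hposcoord _ h δ hδ
                rw [rneg] at this
                linarith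
              apply hβτ
              have hco : ∀ δ ∈ Δ, r β δ = (if δ = τ then 1 else 0) := by
                intro δ hδ
                by_cases hδτ : δ = τ
                · subst hδτ
                  obtain ⟨k, hk⟩ := hcoordInt β hβΦ δ hδ
                  have h1 := hle δ hδ
                  rw [hγco δ hδ, if_pos rfl] at h1
                  have h2 : 0 < (k:ℝ) := hk ▸ hrτ
                  have h3 : (k:ℝ) ≤ 1 := by rw [← hk]; linarith
                  have hk1 : k = 1 := by
                    have : 0 < k := by exact_mod_cast h2
                    have : k ≤ 1 := by exact_mod_cast h3
                    omega
                  rw [if_pos rfl, hk, hk1]; norm_num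
                · have h1 := hle δ hδ
                  rw [hγco δ hδ, if_neg hδτ] at h1
                  have h2 := hposcoord β hβ δ hδ
                  rw [if_neg hδτ]
                  linarith
              calc β = ∑ α ∈ Δ, r β α • α := (lemB β).symm
                _ = ∑ α ∈ Δ, (if α = τ then (1:ℝ) else 0) • α :=
                    Finset.sum_congr rfl (fun α hα => by rw [hco α hα])
                _ = τ := by simp [ite_smul, hτ]
          -- height decreases
          have hn0 : n ≠ 0 := by
            intro hc
            have h1 : 0 < ∑ δ ∈ Δ, r β δ :=
              lt_of_lt_of_le hrτ (Finset.single_le_sum (fun δ hδ => hposcoord β hβ δ hδ) hτ)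
            rw [hn, hc] at h1; norm_num at h1
          have hγht : ∑ δ ∈ Δ, r (β - τ) δ = ((n-1 : ℕ):ℝ) := by
            have h1 : ∑ δ ∈ Δ, r (β - τ) δ
                = (∑ δ ∈ Δ, r β δ) - ∑ δ ∈ Δ, (if δ = τ then (1:ℝ) else 0) := by
              rw [← Finset.sum_sub_distrib]
              exact Finset.sum_congr rfl (fun δ hδ => by rw [hγco δ hδ])
            rw [h1, hn, Finset.sum_ite_eq' Δ τ (fun _ => (1:ℝ)), if_pos hτ]
            have : (1:ℕ) ≤ n := Nat.one_le_iff_ne_zero.mpr hn0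
            push_cast [Nat.cast_sub this]
            ring
          rcases IH (n-1) (Nat.sub_lt (Nat.pos_of_ne_zero hn0) one_pos) P Q hPQ horth
              (β - τ) hγpos hγht with hcase | hcase
          · left
            intro δ hδ hQδ
            have hne : δ ≠ τ := fun hc => hdisj δ hδ (hc ▸ hPτ) hQδ
            have := hcase δ hδ hQδ
            rw [hγco δ hδ, if_neg hne] at this
            linarith
          · exfalso
            have hγτ : r (β - τ) τ = 0 := hcase τ hτ hPτ
            have hrβτ : r β τ = 1 := by
              have := hγτ
              rw [hγco τ hτ, if_pos rfl] at this
              linarith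
            -- ⟪β - τ, τ⟫ = 0
            have hγip : ⟪β - τ, τ⟫ = (0:ℝ) := by
              have h := sum_inner (𝕜 := ℝ) Δ (fun α => r (β - τ) α • α) τ
              rw [lemB (β - τ)] at h
              simp only [real_inner_smul_left] at h
              rw [h]
              apply Finset.sum_eq_zero
              intro δ hδ
              by_cases hδ0 : r (β - τ) δ = 0
              · rw [hδ0, zero_mul]
              · have hQδ : Q δ := by
                  rcases hPQ δ hδ with hP | hQ
                  · exact absurd (hcase δ hδ hP) hδ0
                  · exact hQ
                have : ⟪δ, τ⟫ = 0 := by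
                  rw [real_inner_comm]
                  exact horth τ hτ δ hδ hPτ hQδ
                rw [this, mul_zero]
            have hβτip : ⟪β, τ⟫ = ⟪τ, τ⟫ := by
              have : ⟪β - τ, τ⟫ = ⟪β, τ⟫ - ⟪τ, τ⟫ := inner_sub_left _ _ _
              rw [this] at hγip
              linarith
            have hs2 : 2 * ⟪β, τ⟫ / ⟪τ, τ⟫ = (2:ℝ) := by
              rw [hβτip, mul_div_assoc, div_self (hip τ hτΦ).ne', mul_one]
            have hσΦ : β - (2:ℝ) • τ ∈ Φ := by
              have := hrefl τ hτΦ β hβΦ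
              rwa [hs2] at this
            have hσco : ∀ δ ∈ Δ, r (β - (2:ℝ) • τ) δ = r β δ - 2 * (if δ = τ then 1 else 0) := by
              intro δ hδ
              rw [rsub]
              have : r ((2:ℝ) • τ) δ = 2 * r τ δ := by
                simp only [hr]
                by_cases h : δ ∈ Δ
                · simp [dif_pos h]
                · simp [dif_neg h]
              rw [this, rΔ τ hτ δ hδ]
            -- β - τ is a nonzero positive root with r (β-τ) τ = 0
            have hγne : ∃ δ ∈ Δ, δ ≠ τ ∧ 0 < r (β - τ) δ := by
              by_contra hc
              push_neg at hc
              apply hnz _ hγΦ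
              apply hzero
              intro δ hδ
              by_cases hδτ : δ = τ
              · rw [hδτ]; exact hγτ
              · have h1 := hc δ hδ hδτ
                have h2 := hposcoord _ hγpos δ hδ
                linarith
            obtain ⟨δ₀, hδ₀, hδ₀τ, hδ₀pos⟩ := hγne
            rcases hdich _ hσΦ with h | h
            · have := hposcoord _ h τ hτ
              rw [hσco τ hτ, if_pos rfl, hrβτ] at this
              norm_num at this
            · have := hposcoord _ h δ₀ hδ₀
              rw [rneg, hσco δ₀ hδ₀, if_neg hδ₀τ] at this
              have h3 : r (β - τ) δ₀ = r β δ₀ := by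
                rw [hγco δ₀ hδ₀, if_neg hδ₀τ]; ring
              rw [h3] at hδ₀pos
              linarith
      intro P Q hPQ horth β hβ hn
      obtain ⟨τ, hτ, hrτ, hiτ⟩ := findτ β hβ
      rcases hPQ τ hτ with hPτ | hQτ
      · exact core P Q hPQ horth β hβ hn τ hτ hPτ hrτ hiτ
      · have hPQ' : ∀ δ ∈ Δ, Q δ ∨ P δ := fun δ hδ => (hPQ δ hδ).symm
        have horth' : ∀ τ' ∈ Δ, ∀ σ ∈ Δ, Q τ' → P σ → ⟪τ', σ⟫ = 0 := by
          intro τ' hτ' σ hσ hQ hP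
          rw [real_inner_comm]
          exact horth σ hσ τ' hτ' hP hQ
        exact (core Q P hPQ' horth' β hβ hn τ hτ hQτ hrτ hiτ).symm
  -- no nontrivial orthogonal splitting of Δ
  have noorth : ∀ T : Finset V, T ⊆ Δ → T.Nonempty → (∃ σ ∈ Δ, σ ∉ T) →
      (∀ τ ∈ Δ, ∀ σ ∈ Δ, τ ∈ T → σ ∉ T → ⟪τ, σ⟫ = 0) → False := by
    rintro T hTΔ ⟨τ₀, hτ₀⟩ ⟨σ₀, hσ₀Δ, hσ₀⟩ horth
    have hsupp : ∀ β ∈ Φ, (∀ δ ∈ Δ, δ ∉ T → r β δ = 0) ∨ (∀ δ ∈ Δ, δ ∈ T → r β δ = 0) := by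
      intro β hβ
      have hPQ : ∀ δ ∈ Δ, δ ∈ T ∨ δ ∉ T := fun δ _ => Classical.em (δ ∈ T)
      rcases hdich β hβ with h | h
      · exact split _ _ hPQ horth β h
      · rcases split _ _ hPQ horth (-β) h with h' | h'
        · left; intro δ hδ hh; have := h' δ hδ hh; rw [rneg] at this; linarith
        · right; intro δ hδ hh; have := h' δ hδ hh; rw [rneg] at this; linarith
    set Φ₁ := Φ.filter (fun β => ∀ δ ∈ Δ, δ ∉ T → r β δ = 0) with hΦ₁
    set Φ₂ := Φ.filter (fun β => ¬ ∀ δ ∈ Δ, δ ∉ T → r β δ = 0) with hΦ₂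
    have hmem₁ : τ₀ ∈ Φ₁ := by
      rw [hΦ₁, Finset.mem_filter]
      refine ⟨hΔΦ (hTΔ hτ₀), fun δ hδ hδT => ?_⟩
      rw [rΔ τ₀ (hTΔ hτ₀) δ hδ, if_neg (fun hc => hδT (by rw [hc]; exact hτ₀))]
    have hmem₂ : σ₀ ∈ Φ₂ := by
      rw [hΦ₂, Finset.mem_filter]
      refine ⟨hΔΦ hσ₀Δ, fun hc => ?_⟩
      have := hc σ₀ hσ₀Δ hσ₀
      rw [rΔ σ₀ hσ₀Δ σ₀ hσ₀Δ, if_pos rfl] at this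
      norm_num at this
    apply hirr Φ₁ Φ₂ ⟨τ₀, hmem₁⟩ ⟨σ₀, hmem₂⟩ (Finset.filter_union_filter_not_eq _ Φ)
      (Finset.disjoint_filter_filter_not Φ Φ _)
    intro α hα β hβ
    rw [hΦ₁, Finset.mem_filter] at hα
    rw [hΦ₂, Finset.mem_filter] at hβ
    have hβT : ∀ δ ∈ Δ, δ ∈ T → r β δ = 0 := by
      rcases hsupp β hβ.1 with h | h
      · exact absurd h hβ.2
      · exact h
    have h1 : ⟪α, β⟫ = ∑ δ ∈ Δ, r α δ * ⟪δ, β⟫ := by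
      have h := sum_inner (𝕜 := ℝ) Δ (fun x => r α x • x) β
      rw [lemB α] at h
      simp only [real_inner_smul_left] at h
      exact h
    rw [h1]
    apply Finset.sum_eq_zero
    intro δ hδ
    by_cases hδ0 : r α δ = 0
    · rw [hδ0, zero_mul]
    · have hδT : δ ∈ T := by
        by_contra hc
        exact hδ0 (hα.2 δ hδ hc)
      have h2 : ⟪δ, β⟫ = ∑ ε ∈ Δ, r β ε * ⟪δ, ε⟫ := by
        have h := inner_sum (𝕜 := ℝ) Δ (fun x => r β x • x) δ
        rw [lemB β] at h
        simp only [real_inner_smul_right] at h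
        exact h
      have h3 : ∑ ε ∈ Δ, r β ε * ⟪δ, ε⟫ = 0 := by
        apply Finset.sum_eq_zero
        intro ε hε
        by_cases hε0 : r β ε = 0
        · rw [hε0, zero_mul]
        · have hεT : ε ∉ T := fun hc => hε0 (hβT ε hε hc)
          rw [horth δ hδ ε hε hδT hεT, mul_zero]
      rw [h2, h3, mul_zero]
  -- setup for the chain construction
  set N := Submodule.span ℝ (S : Set V) with hN
  set Ψ := Φpos.filter (fun β => β ∉ N) with hΨ
  have hNiff := hspanT S hS
  have hΨspan : ∀ β ∈ Φpos, β ∉ N → β ∈ Submodule.span ℝ (Ψ : Set V) := by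
    intro β h1 h2
    exact Submodule.subset_span
      (Finset.mem_coe.mpr (Finset.mem_filter.mpr ⟨h1, h2⟩))
  obtain ⟨δs, hδsΔ, hδsS⟩ : ∃ δ ∈ Δ, δ ∉ S := by
    by_contra hc
    push_neg at hc
    exact hSne (Finset.Subset.antisymm hS hc)
  let D : ℕ → Finset V := fun n => Nat.rec (Δ \ S)
    (fun _ Dn => Dn ∪ Δ.filter (fun σ => ∃ τ ∈ Dn, ⟪σ, τ⟫ ≠ 0)) n
  have hD0 : D 0 = Δ \ S := rfl
  have hDsucc : ∀ n, D (n+1) = D n ∪ Δ.filter (fun σ => ∃ τ ∈ D n, ⟪σ, τ⟫ ≠ 0) := fun n => rfl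
  have hDΔ : ∀ n, D n ⊆ Δ := by
    intro n
    induction n with
    | zero => rw [hD0]; exact Finset.sdiff_subset
    | succ n ih => rw [hDsucc]; exact Finset.union_subset ih (Finset.filter_subset _ _)
  have hDmono : ∀ n, D n ⊆ D (n+1) := fun n => by
    rw [hDsucc]; exact Finset.subset_union_left
  have hD0n : ∀ n, D 0 ⊆ D n := by
    intro n
    induction n with
    | zero => exact Finset.Subset.refl _
    | succ n ih => exact ih.trans (hDmono n)
  -- the main chain claim
  have claim : ∀ n : ℕ, ∀ δ ∈ D n, δ ∈ Submodule.span ℝ (Ψ : Set V) ∧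
      ∃ β ∈ Φpos, β ∉ N ∧ (∀ ε ∈ Δ, r β ε = 0 ∨ (r β ε = 1 ∧ ε ∈ D n)) ∧ r β δ = 1 := by
    intro n
    induction n with
    | zero =>
      intro δ hδ
      rw [hD0, Finset.mem_sdiff] at hδ
      obtain ⟨hδΔ, hδS⟩ := hδ
      have hδpos := hsimplepos δ hδΔ
      have hδN : δ ∉ N := by
        intro hc
        have := (hNiff δ).mp hc δ hδΔ hδS
        rw [rΔ δ hδΔ δ hδΔ, if_pos rfl] at this
        norm_num at this
      refine ⟨hΨspan δ hδpos hδN, δ, hδpos, hδN, ?_, ?_⟩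
      · intro ε hε
        by_cases h : ε = δ
        · right
          rw [rΔ δ hδΔ ε hε, if_pos h]
          refine ⟨rfl, ?_⟩
          rw [hD0, Finset.mem_sdiff, h]
          exact ⟨hδΔ, hδS⟩
        · left; rw [rΔ δ hδΔ ε hε, if_neg h]
      · rw [rΔ δ hδΔ δ hδΔ, if_pos rfl]
    | succ n ih =>
      intro δ hδ
      rcases Classical.em (δ ∈ D n) with hδn | hδn
      · obtain ⟨h1, β, h2, h3, h4, h5⟩ := ih δ hδn
        exact ⟨h1, β, h2, h3, fun ε hε => (h4 ε hε).imp id (fun h => ⟨h.1, hDmono n h.2⟩), h5⟩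
      · rw [hDsucc, Finset.mem_union] at hδ
        rcases hδ with h | h
        · exact absurd h hδn
        rw [Finset.mem_filter] at h
        obtain ⟨hδΔ, τ, hτn, hτip⟩ := h
        have hτΔ := hDΔ n hτn
        obtain ⟨hτW, β', hβ'pos, hβ'N, hβ'co, hβ'τ⟩ := ih τ hτn
        have hδS : δ ∈ S := by
          by_contra hc
          apply hδn
          apply hD0n n
          rw [hD0, Finset.mem_sdiff]
          exact ⟨hδΔ, hc⟩
        have hrβ'δ : r β' δ = 0 := by
          rcases hβ'co δ hδΔ with h | h
          · exact h
          · exact absurd h.2 hδn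
        have hipneg : ⟪δ, β'⟫ < 0 := by
          have h2 : ⟪δ, β'⟫ = ∑ ε ∈ Δ, r β' ε * ⟪δ, ε⟫ := by
            have h := inner_sum (𝕜 := ℝ) Δ (fun x => r β' x • x) δ
            rw [lemB β'] at h
            simp only [real_inner_smul_right] at h
            exact h
          have hterms : ∀ ε ∈ Δ, r β' ε * ⟪δ, ε⟫ ≤ 0 := by
            intro ε hε
            rcases hβ'co ε hε with hc | hc
            · rw [hc, zero_mul]
            · rw [hc.1, one_mul]
              exact L2 δ hδΔ ε hε (fun heq => hδn (heq ▸ hc.2))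
          have hτterm : r β' τ * ⟪δ, τ⟫ < 0 := by
            rw [hβ'τ, one_mul]
            rcases lt_or_eq_of_le (L2 δ hδΔ τ hτΔ (fun heq => hδn (heq ▸ hτn))) with hc | hc
            · exact hc
            · exact absurd hc hτip
          have hlt : ∑ ε ∈ Δ, r β' ε * ⟪δ, ε⟫ < ∑ ε ∈ Δ, (0:ℝ) :=
            Finset.sum_lt_sum hterms ⟨τ, hτΔ, hτterm⟩
          rw [Finset.sum_const_zero] at hlt
          rw [h2]
          exact hlt
        have hβ'Φ := ΦposΦ β' hβ'pos
        have hβΦ : δ + β' ∈ Φ := by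
          have h1 : δ ≠ -β' := by
            intro hc
            have h2 : r δ δ = 1 := by rw [rΔ δ hδΔ δ hδΔ, if_pos rfl]
            have h3 : r (-β') δ = 1 := by rw [← hc]; exact h2
            rw [rneg, hrβ'δ] at h3
            norm_num at h3
          have h1' : δ ≠ -(-β') := by
            rw [neg_neg]
            intro hc
            have h2 : r δ δ = 1 := by rw [rΔ δ hδΔ δ hδΔ, if_pos rfl]
            have h3 : r β' δ = 1 := by rw [← hc]; exact h2
            rw [hrβ'δ] at h3
            norm_num at h3
          have hpos' : 0 < ⟪δ, -β'⟫ := by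
            rw [inner_neg_right]
            linarith
          have := L1 δ (hΔΦ hδΔ) (-β') (hnegmem β' hβ'Φ) h1 h1' hpos'
          rwa [sub_neg_eq_add] at this
        have hβco : ∀ ε ∈ Δ, r (δ + β') ε = (if ε = δ then 1 else 0) + r β' ε := by
          intro ε hε
          rw [radd, rΔ δ hδΔ ε hε]
        have hβpos : δ + β' ∈ Φpos := by
          apply hposof _ hβΦ δ hδΔ
          rw [hβco δ hδΔ, if_pos rfl, hrβ'δ]
          norm_num
        have hβN : δ + β' ∉ N := by
          have hex : ¬ ∀ ε ∈ Δ, ε ∉ S → r β' ε = 0 := fun hc => hβ'N ((hNiff β').mpr hc)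
          push_neg at hex
          obtain ⟨ε₀, hε₀Δ, hε₀S, hε₀⟩ := hex
          intro hc
          have := (hNiff _).mp hc ε₀ hε₀Δ hε₀S
          rw [hβco ε₀ hε₀Δ, if_neg (fun heq => hε₀S (by rw [heq]; exact hδS)), zero_add] at this
          exact hε₀ this
        have hmemsucc : δ ∈ D (n+1) := by
          rw [hDsucc, Finset.mem_union]
          right
          rw [Finset.mem_filter]
          exact ⟨hδΔ, τ, hτn, hτip⟩
        refine ⟨?_, δ + β', hβpos, hβN, ?_, ?_⟩
        · have h1 := hΨspan _ hβpos hβN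
          have h2 := hΨspan _ hβ'pos hβ'N
          have h3 : δ = (δ + β') - β' := by abel
          rw [h3]
          exact Submodule.sub_mem _ h1 h2
        · intro ε hε
          by_cases h : ε = δ
          · right
            rw [hβco ε hε, if_pos h, h, hrβ'δ]
            exact ⟨by norm_num, h ▸ hmemsucc⟩
          · rcases hβ'co ε hε with h' | h'
            · left; rw [hβco ε hε, if_neg h, h', add_zero]
            · right
              rw [hβco ε hε, if_neg h, h'.1]
              exact ⟨by norm_num, hDmono n h'.2⟩
        · rw [hβco δ hδΔ, if_pos rfl, hrβ'δ]
          norm_num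
  -- stabilization : all of Δ is eventually reached
  have hstab : ∃ n, ∀ δ ∈ Δ, δ ∈ D n := by
    have hex : ∃ n, D (n+1) ⊆ D n := by
      by_contra hc
      push_neg at hc
      have hgrow : ∀ n, n ≤ (D n).card := by
        intro n
        induction n with
        | zero => exact Nat.zero_le _
        | succ n ih =>
          have hss : D n ⊂ D (n+1) := (Finset.ssubset_def).mpr ⟨hDmono n, hc n⟩
          have := Finset.card_lt_card hss
          omega
      have h1 := hgrow (Δ.card + 1)
      have h2 := Finset.card_le_card (hDΔ (Δ.card + 1))
      omega
    obtain ⟨n, hn⟩ := hex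
    refine ⟨n, ?_⟩
    by_contra hc
    push_neg at hc
    obtain ⟨σ₀, hσ₀Δ, hσ₀⟩ := hc
    apply noorth (D n) (hDΔ n) ⟨δs, hD0n n (by rw [hD0, Finset.mem_sdiff]; exact ⟨hδsΔ, hδsS⟩)⟩
      ⟨σ₀, hσ₀Δ, hσ₀⟩
    intro τ hτΔ σ hσΔ hτT hσT
    by_contra hip0
    apply hσT
    apply hn
    rw [hDsucc, Finset.mem_union]
    right
    rw [Finset.mem_filter]
    refine ⟨hσΔ, τ, hτT, ?_⟩
    rw [real_inner_comm]
    exact hip0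
  -- conclusion
  have hspanΨ : Submodule.span ℝ (Ψ : Set V) = ⊤ := by
    rw [eq_top_iff, ← hΔspan, Submodule.span_le]
    intro δ hδ
    obtain ⟨n, hn⟩ := hstab
    exact (claim n δ (hn δ (Finset.mem_coe.mp hδ))).1
  calc ℓ = Module.finrank ℝ V := hdim.symm
    _ = Module.finrank ℝ (Submodule.span ℝ ((Ψ : Finset V) : Set V)) := by
        rw [hspanΨ, finrank_top]
    _ ≤ Ψ.card := by
        simpa [Set.finrank] using finrank_span_finset_le_card (R := ℝ) Ψ
end

section
/- Let ℓ ≥ 2 and work in ℝ^ℓ with standard basis e_1,…,e_ℓ. Let Φ⁺ = {e_a : 1 ≤ a ≤ ℓ} ∪ {e_a − e_b : 1 ≤ a < b ≤ ℓ} ∪ {e_a + e_b : 1 ≤ a < b ≤ ℓ} (the positive roots of the root system B_ℓ; it has ℓ² elements), and let the simple roots be α_j = e_j − e_{j+1} for 1 ≤ j ≤ ℓ−1 and α_ℓ = e_ℓ. Then for every 1 ≤ i ≤ ℓ: (a) the number of elements of Φ⁺ lying in the linear span of {α_j : 1 ≤ j ≤ ℓ, j ≠ i} equals i(i−1)/2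 + (ℓ−i)²; (b) the number of elements of Φ⁺ not lying in that span, namely ℓ² − i(i−1)/2 − (ℓ−i)², is strictly greater than ℓ. -/
open scoped RealInnerProductSpace

attribute [local instance] Classical.propDecidable

/-- The standard basis vector `e_j` (1-based) of `ℝ^ℓ`; zero for out-of-range indices. -/
noncomputable def E (ℓ : ℕ) (j : ℕ) : EuclideanSpace ℝ (Fin ℓ) :=
  if h : 1 ≤ j ∧ j ≤ ℓ then EuclideanSpace.single (⟨j - 1, by omega⟩ : Fin ℓ) (1 : ℝ) else 0

/-- The positive roots `e_a` (`1 ≤ a ≤ ℓ`), `e_a - e_b` and `e_a + e_b` (`1 ≤ a < b ≤ ℓ`)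
of the root system `B_ℓ` in `ℝ^ℓ`. -/
noncomputable def PhiB (ℓ : ℕ) : Finset (EuclideanSpace ℝ (Fin ℓ)) :=
  ((Finset.Icc 1 ℓ).image (fun a => E ℓ a)) ∪
  ((((Finset.Icc 1 ℓ) ×ˢ (Finset.Icc 1 ℓ)).filter (fun p => p.1 < p.2)).image
      (fun p => E ℓ p.1 - E ℓ p.2)) ∪
  ((((Finset.Icc 1 ℓ) ×ˢ (Finset.Icc 1 ℓ)).filter (fun p => p.1 < p.2)).image
      (fun p => E ℓ p.1 + E ℓ p.2))

/-- The simple root `α_j` of `B_ℓ`: `α_j = e_j - e_{j+1}` for `1 ≤ j ≤ ℓ-1` and `α_ℓ = e_ℓ`. -/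
noncomputable def alphaB (ℓ j : ℕ) : EuclideanSpace ℝ (Fin ℓ) :=
  if j = ℓ then E ℓ ℓ else E ℓ j - E ℓ (j + 1)

/-- The span of the simple roots `α_j`, `1 ≤ j ≤ ℓ`, `j ≠ i`, of `B_ℓ`. -/
noncomputable def spanB (ℓ i : ℕ) : Submodule ℝ (EuclideanSpace ℝ (Fin ℓ)) :=
  Submodule.span ℝ {v | ∃ j, 1 ≤ j ∧ j ≤ ℓ ∧ j ≠ i ∧ v = alphaB ℓ j}

lemma E_apply' (ℓ a : ℕ) (k : Fin ℓ) :
    E ℓ a k = if 1 ≤ a ∧ a ≤ ℓ ∧ (k : ℕ) = a - 1 then 1 else 0 := by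
  rw [E]
  split_ifs with h1 h2 h3
  · rw [EuclideanSpace.single_apply, if_pos (Fin.ext h2.2.2)]
  · rw [EuclideanSpace.single_apply, if_neg (fun hh => h2 ⟨h1.1, h1.2, by rw [hh]⟩)]
  · omega
  · rfl

noncomputable def fL (ℓ i : ℕ) : EuclideanSpace ℝ (Fin ℓ) →ₗ[ℝ] ℝ where
  toFun v := ∑ a : Fin ℓ, if (a : ℕ) < i then v a else 0
  map_add' x y := by
    simp only [PiLp.add_apply]
    rw [← Finset.sum_add_distrib]
    refine Finset.sum_congr rfl fun a _ => ?_
    split_ifs <;> simp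
  map_smul' c x := by
    simp only [PiLp.smul_apply, smul_eq_mul, RingHom.id_apply]
    rw [Finset.mul_sum]
    refine Finset.sum_congr rfl fun a _ => ?_
    split_ifs <;> simp

lemma fL_apply (ℓ i : ℕ) (v : EuclideanSpace ℝ (Fin ℓ)) :
    fL ℓ i v = ∑ a : Fin ℓ, if (a : ℕ) < i then v a else 0 := rfl

lemma fL_E (ℓ i a : ℕ) (ha1 : 1 ≤ a) (ha2 : a ≤ ℓ) :
    fL ℓ i (E ℓ a) = if a ≤ i then 1 else 0 := by
  rw [fL_apply]
  have hk : a - 1 < ℓ := by omega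
  rw [Finset.sum_eq_single (⟨a - 1, hk⟩ : Fin ℓ)]
  · rw [E_apply']
    simp only [Fin.val_mk, and_true]
    split_ifs <;> first | rfl | omega
  · intro b _ hb
    rw [E_apply']
    have hba : (b : ℕ) ≠ a - 1 := fun h => hb (Fin.ext h)
    split_ifs <;> first | rfl | omega
  · intro h; exact absurd (Finset.mem_univ _) h

lemma fL_vanish {ℓ i : ℕ} (hiℓ : i ≤ ℓ) {v : EuclideanSpace ℝ (Fin ℓ)}
    (hv : v ∈ spanB ℓ i) : fL ℓ i v = 0 := by
  have hle : spanB ℓ i ≤ LinearMap.ker (fL ℓ i) := by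
    rw [spanB, Submodule.span_le]
    rintro w ⟨j, hj1, hjℓ, hji, rfl⟩
    simp only [SetLike.mem_coe, LinearMap.mem_ker, alphaB]
    split_ifs with h
    · rw [fL_E ℓ i ℓ (by omega) le_rfl, if_neg (by omega)]
    · rw [map_sub, fL_E ℓ i j hj1 (by omega), fL_E ℓ i (j+1) (by omega) (by omega)]
      split_ifs <;> first | (exfalso; omega) | norm_num
  exact hle hv

lemma alpha_mem {ℓ i j : ℕ} (h1 : 1 ≤ j) (h2 : j ≤ ℓ) (h3 : j ≠ i) :
    alphaB ℓ j ∈ spanB ℓ i :=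
  Submodule.subset_span ⟨j, h1, h2, h3, rfl⟩

lemma diff_mem {ℓ i a : ℕ} (ha : 1 ≤ a) :
    ∀ b, a < b → b ≤ ℓ → (b ≤ i ∨ i < a) → E ℓ a - E ℓ b ∈ spanB ℓ i := by
  intro b
  induction b with
  | zero => omega
  | succ b ih =>
    intro hab hbl hcond
    rcases Nat.lt_or_ge a b with hab' | hab'
    · have hb1 : E ℓ a - E ℓ (b + 1) = (E ℓ a - E ℓ b) + (E ℓ b - E ℓ (b + 1)) := by abel
      have halt : alphaB ℓ b = E ℓ b - E ℓ (b + 1) := by rw [alphaB, if_neg (by omega)]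
      rw [hb1, ← halt]
      exact Submodule.add_mem _ (ih hab' (by omega) (by omega))
        (alpha_mem (by omega) (by omega) (by omega))
    · have hab'' : b = a := by omega
      subst hab''
      have halt : alphaB ℓ b = E ℓ b - E ℓ (b + 1) := by rw [alphaB, if_neg (by omega)]
      rw [← halt]
      exact alpha_mem (by omega) (by omega) (by omega)

lemma single_mem {ℓ i a : ℕ} (hia : i < a) (haℓ : a ≤ ℓ) (ha1 : 1 ≤ a) :
    E ℓ a ∈ spanB ℓ i := by
  have hEl : E ℓ ℓ ∈ spanB ℓ i := by
    have halt : alphaB ℓ ℓ = E ℓ ℓ := if_pos rfl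
    exact halt ▸ alpha_mem (by omega) le_rfl (by omega)
  rcases Nat.lt_or_ge a ℓ with h | h
  · have hb1 : E ℓ a = (E ℓ a - E ℓ ℓ) + E ℓ ℓ := by abel
    rw [hb1]
    exact Submodule.add_mem _ (diff_mem ha1 ℓ h le_rfl (Or.inr hia)) hEl
  · have ha : a = ℓ := by omega
    rw [ha]; exact hEl

lemma mem_E_iff {ℓ i a : ℕ} (hi1 : 1 ≤ i) (hiℓ : i ≤ ℓ) (ha1 : 1 ≤ a) (ha2 : a ≤ ℓ) :
    E ℓ a ∈ spanB ℓ i ↔ i < a := by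
  constructor
  · intro h
    by_contra hc
    have h0 := fL_vanish hiℓ h
    rw [fL_E ℓ i a ha1 ha2, if_pos (by omega)] at h0
    norm_num at h0
  · intro h; exact single_mem h ha2 ha1

lemma mem_diff_iff {ℓ i a b : ℕ} (hi1 : 1 ≤ i) (hiℓ : i ≤ ℓ) (ha1 : 1 ≤ a)
    (hab : a < b) (hb : b ≤ ℓ) :
    E ℓ a - E ℓ b ∈ spanB ℓ i ↔ (b ≤ i ∨ i < a) := by
  constructor
  · intro h
    by_contra hc
    have h0 := fL_vanish hiℓ h
    rw [map_sub, fL_E ℓ i a ha1 (by omega), fL_E ℓ i b (by omega) hb] at h0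
    rw [if_pos (by omega), if_neg (by omega)] at h0
    norm_num at h0
  · intro h; exact diff_mem ha1 b hab hb h

lemma mem_sum_iff {ℓ i a b : ℕ} (hi1 : 1 ≤ i) (hiℓ : i ≤ ℓ) (ha1 : 1 ≤ a)
    (hab : a < b) (hb : b ≤ ℓ) :
    E ℓ a + E ℓ b ∈ spanB ℓ i ↔ i < a := by
  constructor
  · intro h
    by_contra hc
    have h0 := fL_vanish hiℓ h
    rw [map_add, fL_E ℓ i a ha1 (by omega), fL_E ℓ i b (by omega) hb] at h0
    rw [if_pos (by omega)] at h0
    split_ifs at h0 <;> norm_num at h0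
  · intro h
    have hb1 : E ℓ a + E ℓ b = (E ℓ a - E ℓ b) + E ℓ b + E ℓ b := by abel
    rw [hb1]
    exact Submodule.add_mem _ (Submodule.add_mem _
      (diff_mem ha1 b hab hb (Or.inr h)) (single_mem (by omega) hb (by omega)))
      (single_mem (by omega) hb (by omega))

lemma card_pairs (a n : ℕ) :
    (((Finset.Icc (a+1) (a+n)) ×ˢ (Finset.Icc (a+1) (a+n))).filter
      (fun p => p.1 < p.2)).card = n * (n-1) / 2 := by
  rw [Finset.card_filter, Finset.sum_product]
  have step : ∀ x ∈ Finset.Icc (a+1) (a+n),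
      (∑ y ∈ Finset.Icc (a+1) (a+n), if x < y then 1 else 0) = a + n - x := by
    intro x hx
    simp only [Finset.mem_Icc] at hx
    rw [← Finset.card_filter]
    have : (Finset.Icc (a+1) (a+n)).filter (fun y => x < y) = Finset.Icc (x+1) (a+n) := by
      ext y
      simp only [Finset.mem_filter, Finset.mem_Icc]
      omega
    rw [this, Nat.card_Icc]
    omega
  rw [Finset.sum_congr rfl step, ← Finset.sum_range_id n]
  refine Finset.sum_nbij' (fun x => a + n - x) (fun k => a + n - k) ?_ ?_ ?_ ?_ ?_
  · intro x hx; simp only [Finset.mem_Icc] at hx; simp only [Finset.mem_range]; omega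
  · intro k hk; simp only [Finset.mem_range] at hk; simp only [Finset.mem_Icc]; omega
  · intro x hx; simp only [Finset.mem_Icc] at hx
    show a + n - (a + n - x) = x; omega
  · intro k hk; simp only [Finset.mem_range] at hk
    show a + n - (a + n - k) = k; omega
  · intro x _; rfl

lemma half_id (n : ℕ) : 2 * (n * (n-1) / 2) = n * (n - 1) := by
  rcases n with _ | m
  · rfl
  · refine Nat.mul_div_cancel' ?_
    have h := Nat.even_mul_succ_self m
    have hh : (m + 1) * (m + 1 - 1) = m * (m + 1) := by rw [Nat.add_sub_cancel]; ring
    rw [hh]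
    exact h.two_dvd

lemma sq_split (n : ℕ) : n * (n - 1) + n = n * n := by
  rcases n with _ | m
  · rfl
  · simp [Nat.succ_sub_one]; ring

lemma tri2 (n : ℕ) : n + n * (n-1) / 2 + n * (n-1) / 2 = n ^ 2 := by
  have h1 := half_id n
  have h2 := sq_split n
  have h3 : n ^ 2 = n * n := sq n
  omega

lemma E_inj {ℓ a c : ℕ} (ha1 : 1 ≤ a) (ha2 : a ≤ ℓ) (hc1 : 1 ≤ c) (hc2 : c ≤ ℓ)
    (h : E ℓ a = E ℓ c) : a = c := by
  have H : E ℓ a (⟨a-1, by omega⟩ : Fin ℓ) = E ℓ c ⟨a-1, by omega⟩ := by rw [h]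
  rw [E_apply', E_apply'] at H
  simp only [Fin.val_mk, and_true] at H
  split_ifs at H <;> first | omega | exact absurd H (by norm_num)

lemma diff_inj {ℓ a b c d : ℕ} (ha1 : 1 ≤ a) (hab : a < b) (hb : b ≤ ℓ)
    (hc1 : 1 ≤ c) (hcd : c < d) (hd : d ≤ ℓ)
    (h : E ℓ a - E ℓ b = E ℓ c - E ℓ d) : a = c ∧ b = d := by
  have hac : a = c := by
    have H : (E ℓ a - E ℓ b) (⟨a-1, by omega⟩ : Fin ℓ)
        = (E ℓ c - E ℓ d) ⟨a-1, by omega⟩ := by rw [h]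
    simp only [PiLp.sub_apply, E_apply', Fin.val_mk, and_true] at H
    split_ifs at H <;> first | omega | exact absurd H (by norm_num)
  refine ⟨hac, ?_⟩
  have H : (E ℓ a - E ℓ b) (⟨b-1, by omega⟩ : Fin ℓ)
      = (E ℓ c - E ℓ d) ⟨b-1, by omega⟩ := by rw [h]
  simp only [PiLp.sub_apply, E_apply', Fin.val_mk, and_true] at H
  split_ifs at H <;> first | omega | exact absurd H (by norm_num)

lemma sum_inj {ℓ a b c d : ℕ} (ha1 : 1 ≤ a) (hab : a < b) (hb : b ≤ ℓ)
    (hc1 : 1 ≤ c) (hcd : c < d) (hd : d ≤ ℓ)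
    (h : E ℓ a + E ℓ b = E ℓ c + E ℓ d) : a = c ∧ b = d := by
  have hbd : b = d := by
    by_contra hne
    rcases Nat.lt_or_ge b d with hlt | hge
    · have H : (E ℓ a + E ℓ b) (⟨d-1, by omega⟩ : Fin ℓ)
          = (E ℓ c + E ℓ d) ⟨d-1, by omega⟩ := by rw [h]
      simp only [PiLp.add_apply, E_apply', Fin.val_mk, and_true] at H
      split_ifs at H <;> first | omega | exact absurd H (by norm_num)
    · have H : (E ℓ a + E ℓ b) (⟨b-1, by omega⟩ : Fin ℓ)
          = (E ℓ c + E ℓ d) ⟨b-1, by omega⟩ := by rw [h]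
      simp only [PiLp.add_apply, E_apply', Fin.val_mk, and_true] at H
      split_ifs at H <;> first | omega | exact absurd H (by norm_num)
  refine ⟨?_, hbd⟩
  subst hbd
  have h' : E ℓ a = E ℓ c := by
    have := h
    exact add_right_cancel this
  exact E_inj ha1 (by omega) hc1 (by omega) h'

lemma no_E_diff {ℓ a c d : ℕ} (ha1 : 1 ≤ a) (ha2 : a ≤ ℓ)
    (hc1 : 1 ≤ c) (hcd : c < d) (hd : d ≤ ℓ) :
    E ℓ a ≠ E ℓ c - E ℓ d := by
  intro h
  have H : E ℓ a (⟨d-1, by omega⟩ : Fin ℓ) = (E ℓ c - E ℓ d) ⟨d-1, by omega⟩ := by rw [h]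
  simp only [PiLp.sub_apply, E_apply', Fin.val_mk, and_true] at H
  split_ifs at H <;> first | omega | exact absurd H (by norm_num)

lemma no_E_sum {ℓ a c d : ℕ} (ha1 : 1 ≤ a) (ha2 : a ≤ ℓ)
    (hc1 : 1 ≤ c) (hcd : c < d) (hd : d ≤ ℓ) :
    E ℓ a ≠ E ℓ c + E ℓ d := by
  intro h
  have H1 : E ℓ a (⟨c-1, by omega⟩ : Fin ℓ) = (E ℓ c + E ℓ d) ⟨c-1, by omega⟩ := by rw [h]
  have H2 : E ℓ a (⟨d-1, by omega⟩ : Fin ℓ) = (E ℓ c + E ℓ d) ⟨d-1, by omega⟩ := by rw [h]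
  simp only [PiLp.add_apply, E_apply', Fin.val_mk, and_true] at H1 H2
  split_ifs at H1 H2 <;> first | omega | (exfalso; first | (norm_num at H1; done) | norm_num at H2)

lemma no_diff_sum {ℓ a b c d : ℕ} (ha1 : 1 ≤ a) (hab : a < b) (hb : b ≤ ℓ)
    (hc1 : 1 ≤ c) (hcd : c < d) (hd : d ≤ ℓ) :
    E ℓ a - E ℓ b ≠ E ℓ c + E ℓ d := by
  intro h
  have H : (E ℓ a - E ℓ b) (⟨b-1, by omega⟩ : Fin ℓ)
      = (E ℓ c + E ℓ d) ⟨b-1, by omega⟩ := by rw [h]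
  simp only [PiLp.sub_apply, PiLp.add_apply, E_apply', Fin.val_mk, and_true] at H
  split_ifs at H <;> first | omega | exact absurd H (by norm_num)

noncomputable def Pset (ℓ : ℕ) : Finset (ℕ × ℕ) :=
  ((Finset.Icc 1 ℓ) ×ˢ (Finset.Icc 1 ℓ)).filter (fun p => p.1 < p.2)

section counting

variable (ℓ : ℕ)

lemma Pmem (p : ℕ × ℕ) : p ∈ Pset ℓ ↔ 1 ≤ p.1 ∧ p.1 < p.2 ∧ p.2 ≤ ℓ := by
  simp only [Pset, Finset.mem_filter, Finset.mem_product, Finset.mem_Icc]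
  omega

lemma injE : Set.InjOn (fun a => E ℓ a) ↑(Finset.Icc 1 ℓ) := by
  intro a ha c hc h
  simp only [Finset.coe_Icc, Set.mem_Icc] at ha hc
  exact E_inj ha.1 ha.2 hc.1 hc.2 h

lemma injD : Set.InjOn (fun p : ℕ × ℕ => E ℓ p.1 - E ℓ p.2) ↑(Pset ℓ) := by
  intro p hp q hq h
  rw [Finset.mem_coe, Pmem] at hp hq
  have h' := diff_inj hp.1 hp.2.1 hp.2.2 hq.1 hq.2.1 hq.2.2 h
  exact Prod.ext h'.1 h'.2

lemma injS : Set.InjOn (fun p : ℕ × ℕ => E ℓ p.1 + E ℓ p.2) ↑(Pset ℓ) := by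
  intro p hp q hq h
  rw [Finset.mem_coe, Pmem] at hp hq
  have h' := sum_inj hp.1 hp.2.1 hp.2.2 hq.1 hq.2.1 hq.2.2 h
  exact Prod.ext h'.1 h'.2

lemma disjAB : Disjoint ((Finset.Icc 1 ℓ).image (fun a => E ℓ a))
    ((Pset ℓ).image (fun p : ℕ × ℕ => E ℓ p.1 - E ℓ p.2)) := by
  rw [Finset.disjoint_left]
  rintro v hv hv'
  obtain ⟨a, ha, rfl⟩ := Finset.mem_image.1 hv
  obtain ⟨p, hp, hpe⟩ := Finset.mem_image.1 hv'
  rw [Finset.mem_Icc] at ha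
  rw [Pmem] at hp
  exact no_E_diff ha.1 ha.2 hp.1 hp.2.1 hp.2.2 hpe.symm

lemma disjAC : Disjoint ((Finset.Icc 1 ℓ).image (fun a => E ℓ a))
    ((Pset ℓ).image (fun p : ℕ × ℕ => E ℓ p.1 + E ℓ p.2)) := by
  rw [Finset.disjoint_left]
  rintro v hv hv'
  obtain ⟨a, ha, rfl⟩ := Finset.mem_image.1 hv
  obtain ⟨p, hp, hpe⟩ := Finset.mem_image.1 hv'
  rw [Finset.mem_Icc] at ha
  rw [Pmem] at hp
  exact no_E_sum ha.1 ha.2 hp.1 hp.2.1 hp.2.2 hpe.symm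

lemma disjBC : Disjoint ((Pset ℓ).image (fun p : ℕ × ℕ => E ℓ p.1 - E ℓ p.2))
    ((Pset ℓ).image (fun p : ℕ × ℕ => E ℓ p.1 + E ℓ p.2)) := by
  rw [Finset.disjoint_left]
  rintro v hv hv'
  obtain ⟨p, hp, hpe⟩ := Finset.mem_image.1 hv
  obtain ⟨q, hq, hqe⟩ := Finset.mem_image.1 hv'
  rw [Pmem] at hp hq
  exact no_diff_sum hp.1 hp.2.1 hp.2.2 hq.1 hq.2.1 hq.2.2 (hpe.trans hqe.symm)

lemma cardT : (Finset.Icc 1 ℓ).card = ℓ := by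
  rw [Nat.card_Icc]; omega

lemma cardP : (Pset ℓ).card = ℓ * (ℓ - 1) / 2 := by
  have h := card_pairs 0 ℓ
  rw [Pset]
  simpa using h

lemma cardPhi : (PhiB ℓ).card = ℓ ^ 2 := by
  have hPhi : PhiB ℓ = (Finset.Icc 1 ℓ).image (fun a => E ℓ a) ∪
      (Pset ℓ).image (fun p : ℕ × ℕ => E ℓ p.1 - E ℓ p.2) ∪
      (Pset ℓ).image (fun p : ℕ × ℕ => E ℓ p.1 + E ℓ p.2) := rfl
  rw [hPhi, Finset.card_union_of_disjoint
      (Finset.disjoint_union_left.2 ⟨disjAC ℓ, disjBC ℓ⟩),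
    Finset.card_union_of_disjoint (disjAB ℓ),
    Finset.card_image_of_injOn (injE ℓ), Finset.card_image_of_injOn (injD ℓ),
    Finset.card_image_of_injOn (injS ℓ), cardT, cardP]
  exact tri2 ℓ

end counting

lemma cardIn (ℓ i : ℕ) (hℓ : 2 ≤ ℓ) (hi1 : 1 ≤ i) (hiℓ : i ≤ ℓ) :
    ((PhiB ℓ).filter (fun v => v ∈ spanB ℓ i)).card = i * (i - 1) / 2 + (ℓ - i) ^ 2 := by
  have hPhi : PhiB ℓ = (Finset.Icc 1 ℓ).image (fun a => E ℓ a) ∪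
      (Pset ℓ).image (fun p : ℕ × ℕ => E ℓ p.1 - E ℓ p.2) ∪
      (Pset ℓ).image (fun p : ℕ × ℕ => E ℓ p.1 + E ℓ p.2) := rfl
  have hA' : (((Finset.Icc 1 ℓ).image (fun a => E ℓ a)).filter (fun v => v ∈ spanB ℓ i))
      = (Finset.Icc (i+1) ℓ).image (fun a => E ℓ a) := by
    rw [Finset.filter_image]
    congr 1
    ext a
    simp only [Finset.mem_filter, Finset.mem_Icc]
    constructor
    · rintro ⟨⟨h1, h2⟩, hm⟩
      have := (mem_E_iff hi1 hiℓ h1 h2).1 hm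
      omega
    · rintro ⟨h1, h2⟩
      exact ⟨⟨by omega, h2⟩, (mem_E_iff hi1 hiℓ (by omega) h2).2 (by omega)⟩
  have hB' : (((Pset ℓ).image (fun p : ℕ × ℕ => E ℓ p.1 - E ℓ p.2)).filter
        (fun v => v ∈ spanB ℓ i))
      = ((((Finset.Icc 1 i) ×ˢ (Finset.Icc 1 i)).filter (fun p => p.1 < p.2)) ∪
         (((Finset.Icc (i+1) ℓ) ×ˢ (Finset.Icc (i+1) ℓ)).filter (fun p => p.1 < p.2))).image
        (fun p : ℕ × ℕ => E ℓ p.1 - E ℓ p.2) := by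
    rw [Finset.filter_image]
    congr 1
    ext p
    simp only [Pset, Finset.mem_filter, Finset.mem_union, Finset.mem_product, Finset.mem_Icc]
    constructor
    · rintro ⟨⟨⟨⟨h1, h2⟩, h3, h4⟩, h5⟩, hm⟩
      have := (mem_diff_iff hi1 hiℓ h1 h5 h4).1 hm
      omega
    · intro h
      have hb1 : 1 ≤ p.1 := by omega
      have hb2 : p.1 ≤ ℓ := by omega
      have hb3 : 1 ≤ p.2 := by omega
      have hb4 : p.2 ≤ ℓ := by omega
      have hlt : p.1 < p.2 := by omega
      have hcond : p.2 ≤ i ∨ i < p.1 := by omega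
      exact ⟨⟨⟨⟨hb1, hb2⟩, hb3, hb4⟩, hlt⟩, (mem_diff_iff hi1 hiℓ hb1 hlt hb4).2 hcond⟩
  have hC' : (((Pset ℓ).image (fun p : ℕ × ℕ => E ℓ p.1 + E ℓ p.2)).filter
        (fun v => v ∈ spanB ℓ i))
      = ((((Finset.Icc (i+1) ℓ) ×ˢ (Finset.Icc (i+1) ℓ)).filter (fun p => p.1 < p.2))).image
        (fun p : ℕ × ℕ => E ℓ p.1 + E ℓ p.2) := by
    rw [Finset.filter_image]
    congr 1
    ext p
    simp only [Pset, Finset.mem_filter, Finset.mem_product, Finset.mem_Icc]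
    constructor
    · rintro ⟨⟨⟨⟨h1, h2⟩, h3, h4⟩, h5⟩, hm⟩
      have := (mem_sum_iff hi1 hiℓ h1 h5 h4).1 hm
      omega
    · rintro ⟨⟨⟨h1, h2⟩, h3, h4⟩, h5⟩
      exact ⟨⟨⟨⟨by omega, h2⟩, by omega, h4⟩, h5⟩,
        (mem_sum_iff hi1 hiℓ (by omega) h5 h4).2 (by omega)⟩
  have hsubP1 : (((Finset.Icc 1 i) ×ˢ (Finset.Icc 1 i)).filter (fun p => p.1 < p.2)) ∪
      (((Finset.Icc (i+1) ℓ) ×ˢ (Finset.Icc (i+1) ℓ)).filter (fun p => p.1 < p.2)) ⊆ Pset ℓ := by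
    intro p hp
    rw [Pmem]
    simp only [Finset.mem_union, Finset.mem_filter, Finset.mem_product, Finset.mem_Icc] at hp
    omega
  have hsubP2 : (((Finset.Icc (i+1) ℓ) ×ˢ (Finset.Icc (i+1) ℓ)).filter (fun p => p.1 < p.2))
      ⊆ Pset ℓ := by
    intro p hp
    rw [Pmem]
    simp only [Finset.mem_filter, Finset.mem_product, Finset.mem_Icc] at hp
    omega
  have hsubT : Finset.Icc (i+1) ℓ ⊆ Finset.Icc 1 ℓ := Finset.Icc_subset_Icc (by omega) le_rfl
  have d1 := Finset.disjoint_of_subset_left (Finset.image_subset_image hsubT)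
    (Finset.disjoint_of_subset_right (Finset.image_subset_image hsubP1) (disjAB ℓ))
  have d2 := Finset.disjoint_of_subset_left (Finset.image_subset_image hsubT)
    (Finset.disjoint_of_subset_right (Finset.image_subset_image hsubP2) (disjAC ℓ))
  have d3 := Finset.disjoint_of_subset_left (Finset.image_subset_image hsubP1)
    (Finset.disjoint_of_subset_right (Finset.image_subset_image hsubP2) (disjBC ℓ))
  have dU12 : Disjoint (((Finset.Icc 1 i) ×ˢ (Finset.Icc 1 i)).filter (fun p => p.1 < p.2))
      ((((Finset.Icc (i+1) ℓ) ×ˢ (Finset.Icc (i+1) ℓ)).filter (fun p => p.1 < p.2))) := by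
    rw [Finset.disjoint_left]
    intro p hp hp'
    simp only [Finset.mem_filter, Finset.mem_product, Finset.mem_Icc] at hp hp'
    omega
  have cardU1 : (((Finset.Icc 1 i) ×ˢ (Finset.Icc 1 i)).filter (fun p => p.1 < p.2)).card
      = i * (i - 1) / 2 := by
    have h := card_pairs 0 i
    simpa using h
  have cardU2 : (((Finset.Icc (i+1) ℓ) ×ˢ (Finset.Icc (i+1) ℓ)).filter
      (fun p => p.1 < p.2)).card = (ℓ - i) * (ℓ - i - 1) / 2 := by
    have h := card_pairs i (ℓ - i)
    rw [show i + (ℓ - i) = ℓ by omega] at h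
    exact h
  rw [hPhi, Finset.filter_union, Finset.filter_union, hA', hB', hC',
    Finset.card_union_of_disjoint (Finset.disjoint_union_left.2 ⟨d2, d3⟩),
    Finset.card_union_of_disjoint d1,
    Finset.card_image_of_injOn ((injE ℓ).mono (Finset.coe_subset.2 hsubT)),
    Finset.card_image_of_injOn ((injD ℓ).mono (Finset.coe_subset.2 hsubP1)),
    Finset.card_image_of_injOn ((injS ℓ).mono (Finset.coe_subset.2 hsubP2)),
    Finset.card_union_of_disjoint dU12, cardU1, cardU2, Nat.card_Icc]
  have t := tri2 (ℓ - i)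
  omega

lemma ineq_final (ℓ i : ℕ) (hℓ : 2 ≤ ℓ) (hi1 : 1 ≤ i) (hiℓ : i ≤ ℓ) :
    ℓ < ℓ ^ 2 - i * (i - 1) / 2 - (ℓ - i) ^ 2 := by
  obtain ⟨j, rfl⟩ : ∃ j, ℓ = i + j := ⟨ℓ - i, by omega⟩
  obtain ⟨k, rfl⟩ : ∃ k, i = k + 1 := ⟨i - 1, by omega⟩
  have hj : k + 1 + j - (k + 1) = j := by omega
  rw [hj]
  suffices h : (k + 1 + j) + (k + 1) * (k + 1 - 1) / 2 + j ^ 2 < (k + 1 + j) ^ 2 by omega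
  rw [Nat.add_sub_cancel]
  have h0 := half_id (k + 1)
  rw [Nat.add_sub_cancel] at h0
  have h2 : (k + 1) * k = k * k + k := by ring
  have hd : 2 * ((k + 1) * k / 2) = k * k + k := by rw [h0]; ring
  have e1 : 2 * (k + 1 + j) ^ 2 = 2 * (k * k) + 2 * (j * j) + 4 * (k * j)
      + 4 * k + 4 * j + 2 := by ring
  have e2 : 2 * (j ^ 2) = 2 * (j * j) := by ring
  omega

/-- Counting positive roots of `B_ℓ` in and off the span of the simple roots
other than `α_i`. -/
theorem stmt_2 (ℓ : ℕ) (hℓ : 2 ≤ ℓ) (i : ℕ) (hi1 : 1 ≤ i) (hiℓ : i ≤ ℓ) :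
    (PhiB ℓ).card = ℓ ^ 2 ∧
    ((PhiB ℓ).filter (fun v => v ∈ spanB ℓ i)).card = i * (i - 1) / 2 + (ℓ - i) ^ 2 ∧
    ((PhiB ℓ).filter (fun v => v ∉ spanB ℓ i)).card
        = ℓ ^ 2 - i * (i - 1) / 2 - (ℓ - i) ^ 2 ∧
    ℓ < ℓ ^ 2 - i * (i - 1) / 2 - (ℓ - i) ^ 2 := by
  have h1 := cardPhi ℓ
  have h2 := cardIn ℓ i hℓ hi1 hiℓ
  have h3 : ((PhiB ℓ).filter (fun v => v ∉ spanB ℓ i)).card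
      = ℓ ^ 2 - i * (i - 1) / 2 - (ℓ - i) ^ 2 := by
    have h := Finset.card_filter_add_card_filter_not
      (s := PhiB ℓ) (p := fun v => v ∈ spanB ℓ i)
    rw [h1, h2] at h
    omega
  exact ⟨h1, h2, h3, ineq_final ℓ i hℓ hi1 hiℓ⟩
end

section
/- Let ℓ ≥ 2, let q ≥ 2 be a real number, and let 1 ≤ m ≤ n ≤ ℓ be integers. Let w : ℝ^ℓ → ℝ^ℓ be the linear map determined by w(e_j) = e_{j+1} for m ≤ j ≤ n−1, w(e_n) = e_m, and w(e_j) = e_j for all other j. Suppose real numbers x_1 > x_2 > ⋯ > x_m > 0 are given. Then there exist real numbers x_{m+1} > x_{m+2} > ⋯ > x_{min(n+1,ℓ)} > 0 with x_m > x_{m+1} (no new numbers are chosen when m = min(n+1,ℓ)), such that for every choice of real numbers x_{n+2} > x_{n+3} > ⋯ > x_ℓ > 0 with x_{n+1} > x_{n+2} (this choice being empty when n+1 ≥ ℓ), the vector x = (x_1,…,x_ℓ) satisfies ⟨qx − wx, e_i − e_{i+1}⟩ > 0 for all 1 ≤ i ≤ ℓ−1, and moreover ⟨qx − wx, e_n −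 e_{n+1}⟩ > x_{n+1} in case n ≤ ℓ−1. -/
open scoped RealInnerProductSpace

/-- The vector `(x_1, …, x_ℓ) ∈ ℝ^ℓ` built from a (1-based) sequence of reals. -/
noncomputable def vec (ℓ : ℕ) (x : ℕ → ℝ) : EuclideanSpace ℝ (Fin ℓ) :=
  WithLp.toLp 2 (fun i : Fin ℓ => x (i.1 + 1))

def sig (m n j : ℕ) : ℕ := if j = n then m else if m ≤ j ∧ j < n then j + 1 else j
def tau (m n k : ℕ) : ℕ := if k = m then n else if m < k ∧ k ≤ n then k - 1 else k

lemma tau_mem {ℓ m n k : ℕ} (hm : 1 ≤ m) (hmn : m ≤ n) (hn : n ≤ ℓ)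
    (h1 : 1 ≤ k) (h2 : k ≤ ℓ) : 1 ≤ tau m n k ∧ tau m n k ≤ ℓ := by
  unfold tau; split_ifs <;> omega

lemma sig_tau {m n k : ℕ} (hm : 1 ≤ m) (hmn : m ≤ n) (h1 : 1 ≤ k) :
    sig m n (tau m n k) = k := by
  unfold tau sig; split_ifs <;> omega

lemma tau_sig {m n j : ℕ} (hm : 1 ≤ m) (hmn : m ≤ n) (h1 : 1 ≤ j) :
    tau m n (sig m n j) = j := by
  unfold tau sig; split_ifs <;> omega

lemma inner_E_E {ℓ a b : ℕ} (ha1 : 1 ≤ a) (ha2 : a ≤ ℓ) (hb1 : 1 ≤ b) (hb2 : b ≤ ℓ) :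
    ⟪E ℓ a, E ℓ b⟫ = if a = b then (1:ℝ) else 0 := by
  rw [E, E, dif_pos ⟨ha1, ha2⟩, dif_pos ⟨hb1, hb2⟩, EuclideanSpace.inner_single_left]
  simp only [map_one, one_mul, EuclideanSpace.single_apply]
  by_cases h : a = b
  · subst h; simp
  · rw [if_neg (by simp [Fin.ext_iff]; omega), if_neg h]

lemma inner_vec {ℓ a : ℕ} (z : ℕ → ℝ) (ha1 : 1 ≤ a) (ha2 : a ≤ ℓ) :
    ⟪vec ℓ z, E ℓ a⟫ = z a := by
  rw [E, dif_pos ⟨ha1, ha2⟩, EuclideanSpace.inner_single_right]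
  simp only [one_mul, conj_trivial]
  show z (a - 1 + 1) = z a
  congr 1; omega

lemma E_eq (ℓ : ℕ) (i : Fin ℓ) : E ℓ (i.1 + 1) = EuclideanSpace.single i 1 := by
  rw [E, dif_pos ⟨by omega, by omega⟩]
  congr 1

lemma vec_sum (ℓ : ℕ) (z : ℕ → ℝ) :
    vec ℓ z = ∑ i : Fin ℓ, z (i.1 + 1) • E ℓ (i.1 + 1) := by
  rw [← (EuclideanSpace.basisFun (Fin ℓ) ℝ).sum_repr (vec ℓ z)]
  refine Finset.sum_congr rfl fun i _ => ?_
  rw [EuclideanSpace.basisFun_repr, EuclideanSpace.basisFun_apply, E_eq]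
  rfl

lemma inner_wvec {ℓ m n : ℕ} (hm : 1 ≤ m) (hmn : m ≤ n) (hn : n ≤ ℓ)
    (w : EuclideanSpace ℝ (Fin ℓ) →ₗ[ℝ] EuclideanSpace ℝ (Fin ℓ))
    (hwE : ∀ j, 1 ≤ j → j ≤ ℓ → w (E ℓ j) = E ℓ (sig m n j))
    (z : ℕ → ℝ) {a : ℕ} (ha1 : 1 ≤ a) (ha2 : a ≤ ℓ) :
    ⟪w (vec ℓ z), E ℓ a⟫ = z (tau m n a) := by
  obtain ⟨ht1, ht2⟩ := tau_mem (ℓ := ℓ) hm hmn hn ha1 ha2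
  have step : ⟪w (vec ℓ z), E ℓ a⟫
      = ∑ i : Fin ℓ, z (i.1 + 1) * (if sig m n (i.1 + 1) = a then (1:ℝ) else 0) := by
    rw [vec_sum ℓ z, map_sum, sum_inner]
    refine Finset.sum_congr rfl fun i _ => ?_
    rw [map_smul, real_inner_smul_left, hwE (i.1 + 1) (by omega) (by omega),
      inner_E_E (by unfold sig; split_ifs <;> omega) (by unfold sig; split_ifs <;> omega) ha1 ha2]
  rw [step, Finset.sum_eq_single (⟨tau m n a - 1, by omega⟩ : Fin ℓ)]
  · have h1 : tau m n a - 1 + 1 = tau m n a := by omega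
    simp [h1, sig_tau hm hmn ha1]
  · intro b _ hb
    rw [if_neg, mul_zero]
    intro h
    have := tau_sig (m := m) (n := n) hm hmn (j := b.1 + 1) (by omega)
    rw [h] at this
    apply hb
    apply Fin.ext
    show b.1 = tau m n a - 1
    omega
  · intro h; exact absurd (Finset.mem_univ _) h

lemma key_val {ℓ m n : ℕ} (hm : 1 ≤ m) (hmn : m ≤ n) (hn : n ≤ ℓ) (q : ℝ)
    (w : EuclideanSpace ℝ (Fin ℓ) →ₗ[ℝ] EuclideanSpace ℝ (Fin ℓ))
    (hwE : ∀ j, 1 ≤ j → j ≤ ℓ → w (E ℓ j) = E ℓ (sig m n j))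
    (z : ℕ → ℝ) {i : ℕ} (hi1 : 1 ≤ i) (hi2 : i + 1 ≤ ℓ) :
    ⟪q • vec ℓ z - w (vec ℓ z), E ℓ i - E ℓ (i + 1)⟫
      = (q * z i - z (tau m n i)) - (q * z (i + 1) - z (tau m n (i + 1))) := by
  rw [inner_sub_left, inner_sub_right, inner_sub_right, real_inner_smul_left,
    real_inner_smul_left, inner_vec z hi1 (by omega), inner_vec z (by omega) hi2,
    inner_wvec hm hmn hn w hwE z hi1 (by omega),
    inner_wvec hm hmn hn w hwE z (by omega) hi2]
  ring

set_option maxHeartbeats 1000000 in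
/-- Lemma for type `A_{ℓ-1}`. For `w = s_m s_{m+1} ⋯ s_{n-1}` and given
`x_1 > ⋯ > x_m > 0`, one can choose `x_{m+1} > ⋯ > x_{min(n+1,ℓ)} > 0` such that for every
further choice `x_{n+2} > ⋯ > x_ℓ > 0` with `x_{n+1} > x_{n+2}`, one has
`⟨qx - wx, e_i - e_{i+1}⟩ > 0` for all `1 ≤ i ≤ ℓ-1`, and `⟨qx - wx, e_n - e_{n+1}⟩ > x_{n+1}`
if `n ≤ ℓ-1`. -/
theorem stmt_4 (ℓ : ℕ) (hℓ : 2 ≤ ℓ) (q : ℝ) (hq : 2 ≤ q)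
    (m n : ℕ) (hm : 1 ≤ m) (hmn : m ≤ n) (hn : n ≤ ℓ)
    (w : EuclideanSpace ℝ (Fin ℓ) →ₗ[ℝ] EuclideanSpace ℝ (Fin ℓ))
    (hw1 : ∀ j, m ≤ j → j + 1 ≤ n → w (E ℓ j) = E ℓ (j + 1))
    (hw2 : w (E ℓ n) = E ℓ m)
    (hw3 : ∀ j, 1 ≤ j → j ≤ ℓ → (j < m ∨ n < j) → w (E ℓ j) = E ℓ j)
    (x : ℕ → ℝ)
    (hx : ∀ j, 1 ≤ j → j < m → x (j + 1) < x j) (hxm : 0 < x m) :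
    ∃ y : ℕ → ℝ,
      (∀ j, j ≤ m → y j = x j) ∧
      (∀ j, m ≤ j → j < min (n + 1) ℓ → y (j + 1) < y j) ∧
      0 < y (min (n + 1) ℓ) ∧
      ∀ z : ℕ → ℝ,
        (∀ j, j ≤ min (n + 1) ℓ → z j = y j) →
        (∀ j, n + 1 ≤ j → j < ℓ → z (j + 1) < z j) →
        0 < z ℓ →
        (∀ i, 1 ≤ i → i + 1 ≤ ℓ →
          0 < ⟪q • vec ℓ z - w (vec ℓ z), E ℓ i - E ℓ (i + 1)⟫) ∧
        (n + 1 ≤ ℓ →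
          z (n + 1) < ⟪q • vec ℓ z - w (vec ℓ z), E ℓ n - E ℓ (n + 1)⟫) := by
  have hq0 : (0:ℝ) < q := by linarith
  have hwE : ∀ j, 1 ≤ j → j ≤ ℓ → w (E ℓ j) = E ℓ (sig m n j) := by
    intro j hj1 hj2
    unfold sig
    split_ifs with h1 h2
    · subst h1; exact hw2
    · exact hw1 j h2.1 (by omega)
    · exact hw3 j hj1 hj2 (by omega)
  obtain ⟨Δ, hΔdef⟩ : ∃ Δ : ℝ, Δ = (if 2 ≤ m then x (m-1) - x m else x m) := ⟨_, rfl⟩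
  have hΔ : 0 < Δ := by
    rw [hΔdef]; split_ifs with h
    · have h2 : m - 1 + 1 = m := by omega
      have := hx (m-1) (by omega) (by omega)
      rw [h2] at this; linarith
    · exact hxm
  obtain ⟨c, hcdef⟩ : ∃ c : ℝ, c = min (x m / 4) ((q-1) * Δ / 2) := ⟨_, rfl⟩
  have hc : 0 < c := by rw [hcdef]; exact lt_min (by linarith) (by nlinarith)
  have hc1 : c ≤ x m / 4 := by rw [hcdef]; exact min_le_left _ _
  have hc2 : c ≤ (q-1) * Δ / 2 := by rw [hcdef]; exact min_le_right _ _
  obtain ⟨N, hNdef⟩ : ∃ N : ℝ, N = ((n - m : ℕ) : ℝ) := ⟨_, rfl⟩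
  have hN0 : (0:ℝ) ≤ N := by rw [hNdef]; exact Nat.cast_nonneg _
  have hqN : (0:ℝ) < q * (N + 1) := by nlinarith
  obtain ⟨d, hddef⟩ : ∃ d : ℝ, d = c / (q * (N + 1)) := ⟨_, rfl⟩
  have hd : 0 < d := by rw [hddef]; exact div_pos hc hqN
  have hdc : q * (N + 1) * d = c := by
    rw [hddef]; field_simp
  have hNd : N * d < c := by
    nlinarith [mul_nonneg (mul_nonneg (by linarith : (0:ℝ) ≤ q - 1) hN0) hd.le,
      mul_pos hq0 hd]
  have hqNd : q * N * d < c := by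
    nlinarith [mul_pos hq0 hd]
  obtain ⟨t, htdef⟩ : ∃ t : ℝ, t = (q - 1) * x m / (4 * q) := ⟨_, rfl⟩
  have ht : 0 < t := by
    rw [htdef]; apply div_pos (by nlinarith) (by linarith)
  have hqt : q * t = (q - 1) * x m / 4 := by
    rw [htdef]; field_simp
  have htx : t ≤ x m / 4 := by nlinarith [hqt]
  have hq1 : (0:ℝ) < q - 1 := by linarith
  have hCx : x m ≤ (q-1) * x m := by linarith only [mul_nonneg (show (0:ℝ) ≤ q - 2 by linarith only [hq]) hxm.le]
  have hqd : (0:ℝ) < q * d := mul_pos hq0 hd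
  obtain ⟨y, hydef⟩ : ∃ y : ℕ → ℝ, y = (fun j => if j ≤ m then x j else
      if j ≤ n then x m - ((j - m : ℕ):ℝ) * d else t) := ⟨_, rfl⟩
  have hy1 : ∀ j, j ≤ m → y j = x j := by
    intro j hj; simp only [hydef]; rw [if_pos hj]
  have hy2 : ∀ j, m ≤ j → j ≤ n → y j = x m - ((j - m : ℕ):ℝ) * d := by
    intro j h1 h2
    simp only [hydef]
    by_cases h : j ≤ m
    · have hjm : j = m := le_antisymm h h1
      subst hjm
      simp only [if_pos le_rfl, Nat.sub_self, Nat.cast_zero, zero_mul, sub_zero]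
    · simp only [if_neg h, if_pos h2]
  have hy3 : n + 1 ≤ ℓ → y (n+1) = t := by
    intro h; simp only [hydef]; rw [if_neg (by omega : ¬ n + 1 ≤ m),
      if_neg (by omega : ¬ n + 1 ≤ n)]
  have hNd0 : 0 ≤ N * d := mul_nonneg hN0 hd.le
  refine ⟨y, hy1, ?_, ?_, ?_⟩
  · -- chain
    intro j hj1 hj2
    by_cases hjn : j < n
    · rw [hy2 j hj1 (by omega), hy2 (j+1) (by omega) (by omega)]
      have hcast : ((j + 1 - m : ℕ) : ℝ) = ((j - m : ℕ) : ℝ) + 1 := by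
        have h' : (j + 1 - m : ℕ) = (j - m : ℕ) + 1 := by omega
        rw [h']; push_cast; ring
      rw [hcast]
      linarith only [hd]
    · have hj : j = n := by omega
      rw [hj, hy3 (by omega), hy2 n hmn le_rfl, ← hNdef]
      linarith only [hNd, hc1, htx, hxm]
  · -- positivity of last chosen
    by_cases h : n + 1 ≤ ℓ
    · rw [show min (n+1) ℓ = n+1 from by omega, hy3 h]; exact ht
    · rw [show min (n+1) ℓ = n from by omega, hy2 n hmn le_rfl, ← hNdef]
      linarith only [hNd, hc1, hxm]
  · -- main part
    intro z hz1 hz2 hz3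
    have hG1 : ∀ j, j ≤ m → z j = x j := by
      intro j hj; rw [hz1 j (by omega), hy1 j hj]
    have hG2 : ∀ j, m ≤ j → j ≤ n → z j = x m - ((j - m : ℕ):ℝ) * d := by
      intro j h1 h2; rw [hz1 j (by omega), hy2 j h1 h2]
    have hG3 : n + 1 ≤ ℓ → z (n+1) = t := by
      intro h; rw [hz1 (n+1) (by omega), hy3 h]
    have main2 : n + 1 ≤ ℓ →
        z (n+1) < (q * z n - z (tau m n n)) - (q * z (n+1) - z (tau m n (n+1))) := by
      intro hnl
      have ht1 : tau m n (n+1) = n+1 := by unfold tau; split_ifs <;> omega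
      rw [ht1, hG3 hnl]
      by_cases hmn' : m < n
      · have ht2 : tau m n n = n - 1 := by unfold tau; split_ifs <;> omega
        rw [ht2, hG2 n hmn le_rfl, hG2 (n-1) (by omega) (by omega), ← hNdef]
        have hcast : ((n - 1 - m : ℕ):ℝ) = N - 1 := by
          have h' : (n - 1 - m : ℕ) + 1 = (n - m : ℕ) := by omega
          have h'' := congrArg (Nat.cast : ℕ → ℝ) h'
          push_cast at h''
          rw [hNdef]; linarith
        rw [hcast]
        have hN1 : (1:ℝ) ≤ N := by
          rw [hNdef]; exact_mod_cast (by omega : 1 ≤ n - m)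
        have hA : q * N * d < x m / 4 := lt_of_lt_of_le hqNd hc1
        have hB : 0 ≤ (N - 1) * d := mul_nonneg (by linarith only [hN1]) hd.le
        linarith only [hA, hB, hqt, hCx, hxm]
      · have hmn'' : m = n := by omega
        have ht2 : tau m n n = n := by unfold tau; split_ifs <;> omega
        rw [ht2, hG2 n hmn le_rfl]
        have h0 : ((n - m : ℕ):ℝ) = 0 := by
          rw [show (n - m : ℕ) = 0 from by omega]; simp
        rw [h0]
        linarith only [hqt, hCx, hxm]
    have main : ∀ i, 1 ≤ i → i + 1 ≤ ℓ →
        0 < (q * z i - z (tau m n i)) - (q * z (i+1) - z (tau m n (i+1))) := by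
      intro i hi1 hi2
      by_cases hA : i + 1 < m
      · have t1 : tau m n i = i := by unfold tau; split_ifs <;> omega
        have t2 : tau m n (i+1) = i+1 := by unfold tau; split_ifs <;> omega
        rw [t1, t2, hG1 i (by omega), hG1 (i+1) (by omega)]
        have hxi := hx i (by omega) (by omega)
        linarith only [mul_pos hq1 (show (0:ℝ) < x i - x (i+1) by linarith only [hxi])]
      by_cases hB : i + 1 = m
      · have t1 : tau m n i = i := by unfold tau; split_ifs <;> omega
        have t2 : tau m n (i+1) = n := by unfold tau; split_ifs <;> omega
        rw [t1, t2, hG1 i (by omega), hG1 (i+1) (by omega), hG2 n hmn le_rfl, ← hNdef]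
        have hxi1 : x (i+1) = x m := by rw [hB]
        have hxieq : x i = x (m-1) := by congr 1; omega
        have hΔeq : Δ = x i - x m := by
          rw [hΔdef, if_pos (by omega : 2 ≤ m), hxieq]
        rw [hxi1]
        rw [hΔeq] at hc2
        linarith only [hNd, hNd0, hc2]
      by_cases hE : n + 1 ≤ i
      · have t1 : tau m n i = i := by unfold tau; split_ifs <;> omega
        have t2 : tau m n (i+1) = i+1 := by unfold tau; split_ifs <;> omega
        rw [t1, t2]
        have hzi := hz2 i (by omega) (by omega)
        linarith only [mul_pos hq1 (show (0:ℝ) < z i - z (i+1) by linarith only [hzi])]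
      by_cases hF : i = n
      · subst hF
        have := main2 (by omega)
        have h3 := hG3 (by omega)
        linarith only [this, ht, h3]
      -- now m ≤ i < n
      by_cases hG : i = m
      · have t1 : tau m n i = n := by unfold tau; split_ifs <;> omega
        have t2 : tau m n (i+1) = m := by unfold tau; split_ifs <;> omega
        rw [t1, t2, hG2 n hmn le_rfl, hG1 m le_rfl, hG2 i (by omega) (by omega),
          hG2 (i+1) (by omega) (by omega), ← hNdef]
        have e1 : ((i - m : ℕ):ℝ) = 0 := by
          rw [show (i - m : ℕ) = 0 from by omega]; simp
        have e2 : ((i + 1 - m : ℕ):ℝ) = 1 := by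
          rw [show (i + 1 - m : ℕ) = 1 from by omega]; simp
        rw [e1, e2]
        linarith only [hNd0, hqd]
      · -- m < i < n
        have t1 : tau m n i = i - 1 := by unfold tau; split_ifs <;> omega
        have t2 : tau m n (i+1) = i := by unfold tau; split_ifs <;> omega
        rw [t1, t2, hG2 i (by omega) (by omega), hG2 (i+1) (by omega) (by omega),
          hG2 (i-1) (by omega) (by omega)]
        have e1 : ((i + 1 - m : ℕ):ℝ) = ((i - m : ℕ):ℝ) + 1 := by
          have h' : (i + 1 - m : ℕ) = (i - m : ℕ) + 1 := by omega
          rw [h']; push_cast; ring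
        have e2 : ((i - 1 - m : ℕ):ℝ) = ((i - m : ℕ):ℝ) - 1 := by
          have h' : (i - 1 - m : ℕ) + 1 = (i - m : ℕ) := by omega
          have h'' := congrArg (Nat.cast : ℕ → ℝ) h'
          push_cast at h''
          linarith
        rw [e1, e2]
        linarith only [mul_pos hq1 hd]
    constructor
    · intro i hi1 hi2
      rw [key_val hm hmn hn q w hwE z hi1 hi2]
      exact main i hi1 hi2
    · intro hnl
      rw [key_val hm hmn hn q w hwE z (by omega) (by omega)]
      exact main2 hnl
end

section
/- Let ℓ ≥ 2, let q ≥ 2 be a real number, let 1 ≤ m ≤ n ≤ ℓ be integers and let ε ∈ {+1, −1}. Let w : ℝ^ℓ → ℝ^ℓ be the linear map determined by w(e_j) = e_{j+1} for m ≤ j ≤ n−1, w(e_n) = ε·e_m, and w(e_j) = e_j for all other j. Suppose real numbers x_1 > x_2 > ⋯ > x_m > 0 are given, satisfying x_{m−1} > 3x_m in case m ≥ 2. Then there exist real numbers x_{m+1} > x_{m+2} > ⋯ > x_{min(n+1,ℓ)} > 0 with x_m > x_{m+1}, and with x_n > 3x_{n+1} in case n ≤ ℓ−1, such that for every choice of real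 numbers x_{n+2} > x_{n+3} > ⋯ > x_ℓ > 0 with x_{n+1} > x_{n+2} (this choice being empty when n+1 ≥ ℓ), the vector x = (x_1,…,x_ℓ) satisfies ⟨qx − wx, e_1⟩ > 0, ⟨qx − wx, e_i − e_{i+1}⟩ > 0 for all 1 ≤ i ≤ ℓ−1, and ⟨qx − wx, e_n − e_{n+1}⟩ > 2x_{n+1} in case n ≤ ℓ−1. -/
open scoped RealInnerProductSpace

lemma E_apply (ℓ j : ℕ) (hj : 1 ≤ j) (hj' : j ≤ ℓ) (i : Fin ℓ) :
    E ℓ j i = if i.1 + 1 = j then 1 else 0 := by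
  rw [E, dif_pos ⟨hj, hj'⟩, EuclideanSpace.single_apply]
  by_cases h : i.1 + 1 = j
  · rw [if_pos h, if_pos (by rw [Fin.ext_iff]; simp; omega)]
  · rw [if_neg h, if_neg (by rw [Fin.ext_iff]; simp; omega)]

lemma inner_vec_E (ℓ : ℕ) (u : ℕ → ℝ) (k : ℕ) (hk : 1 ≤ k) (hk' : k ≤ ℓ) :
    ⟪vec ℓ u, E ℓ k⟫ = u k := by
  rw [E, dif_pos ⟨hk, hk'⟩, EuclideanSpace.inner_single_right]
  simp [vec]
  congr 1
  omega

lemma inner_E_E_s7 (ℓ a b : ℕ) (ha : 1 ≤ a) (ha' : a ≤ ℓ) (hb : 1 ≤ b) (hb' : b ≤ ℓ) :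
    ⟪E ℓ a, E ℓ b⟫ = if a = b then (1:ℝ) else 0 := by
  have hEb : E ℓ b = EuclideanSpace.single (⟨b - 1, by omega⟩ : Fin ℓ) (1:ℝ) := by
    rw [E, dif_pos ⟨hb, hb'⟩]
  rw [hEb, EuclideanSpace.inner_single_right, E_apply ℓ a ha ha']
  simp only [one_mul, starRingEnd_apply, star_trivial]
  by_cases h : a = b
  · rw [if_pos (by omega), if_pos h]
  · rw [if_neg (by omega), if_neg h]

lemma vec_eq_sum (ℓ : ℕ) (u : ℕ → ℝ) :
    vec ℓ u = ∑ j ∈ Finset.Icc 1 ℓ, u j • E ℓ j := by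
  ext i
  rw [WithLp.ofLp_sum, Finset.sum_apply]
  rw [Finset.sum_eq_single (i.1 + 1)]
  · have h1 : 1 ≤ i.1 + 1 := by omega
    have h2 : i.1 + 1 ≤ ℓ := i.2
    show vec ℓ u i = (u (i.1+1) • E ℓ (i.1+1)) i
    rw [PiLp.smul_apply, E_apply ℓ _ h1 h2, if_pos rfl]
    simp [vec]
  · intro j hj hne
    simp only [Finset.mem_Icc] at hj
    show (u j • E ℓ j) i = 0
    rw [PiLp.smul_apply, E_apply ℓ j hj.1 hj.2, if_neg (by omega)]
    simp
  · intro h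
    exfalso; apply h
    simp only [Finset.mem_Icc]
    exact ⟨by omega, i.2⟩

lemma w_coord (ℓ m n : ℕ) (hm : 1 ≤ m) (hmn : m ≤ n) (hn : n ≤ ℓ) (ε : ℝ)
    (w : EuclideanSpace ℝ (Fin ℓ) →ₗ[ℝ] EuclideanSpace ℝ (Fin ℓ))
    (hw1 : ∀ j, m ≤ j → j + 1 ≤ n → w (E ℓ j) = E ℓ (j + 1))
    (hw2 : w (E ℓ n) = ε • E ℓ m)
    (hw3 : ∀ j, 1 ≤ j → j ≤ ℓ → (j < m ∨ n < j) → w (E ℓ j) = E ℓ j)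
    (z : ℕ → ℝ) (k : ℕ) (hk : 1 ≤ k) (hk' : k ≤ ℓ) :
    ⟪w (vec ℓ z), E ℓ k⟫ =
      if k < m ∨ n < k then z k else if k = m then ε * z n else z (k - 1) := by
  have hterm : ∀ j, 1 ≤ j → j ≤ ℓ →
      ⟪w (E ℓ j), E ℓ k⟫ =
        if j < m ∨ n < j then (if j = k then (1:ℝ) else 0)
        else if j < n then (if j + 1 = k then (1:ℝ) else 0)
        else (if m = k then ε else 0) := by
    intro j h1 h2
    by_cases hA : j < m ∨ n < j
    · rw [hw3 j h1 h2 hA, inner_E_E_s7 ℓ j k h1 h2 hk hk', if_pos hA]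
    · rw [if_neg hA]
      push_neg at hA
      by_cases hB : j < n
      · rw [hw1 j hA.1 (by omega), inner_E_E_s7 ℓ (j+1) k (by omega) (by omega) hk hk', if_pos hB]
      · have hj : j = n := by omega
        subst hj
        rw [if_neg hB, hw2, real_inner_smul_left, inner_E_E_s7 ℓ m k hm (by omega) hk hk']
        by_cases h : m = k
        · rw [if_pos h, if_pos h, mul_one]
        · rw [if_neg h, if_neg h, mul_zero]
  rw [vec_eq_sum, map_sum, sum_inner]
  have hcongr : ∀ j ∈ Finset.Icc 1 ℓ,
      ⟪w (z j • E ℓ j), E ℓ k⟫ = z j *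
        (if j < m ∨ n < j then (if j = k then (1:ℝ) else 0)
         else if j < n then (if j + 1 = k then (1:ℝ) else 0)
         else (if m = k then ε else 0)) := by
    intro j hj
    rw [Finset.mem_Icc] at hj
    rw [map_smul, real_inner_smul_left, hterm j hj.1 hj.2]
  rw [Finset.sum_congr rfl hcongr]
  by_cases hc1 : k < m ∨ n < k
  · rw [if_pos hc1, Finset.sum_eq_single k]
    · rw [if_pos (by omega), if_pos rfl, mul_one]
    · intro j hj hne
      rw [Finset.mem_Icc] at hj
      by_cases hA : j < m ∨ n < j
      · rw [if_pos hA, if_neg (by omega), mul_zero]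
      · rw [if_neg hA]
        by_cases hB : j < n
        · rw [if_pos hB, if_neg (by omega), mul_zero]
        · rw [if_neg hB, if_neg (by omega), mul_zero]
    · intro h; exact absurd (Finset.mem_Icc.mpr ⟨hk, hk'⟩) h
  · rw [if_neg hc1]
    by_cases hc2 : k = m
    · rw [if_pos hc2, Finset.sum_eq_single n]
      · rw [if_neg (by omega), if_neg (by omega), if_pos (by omega), mul_comm]
      · intro j hj hne
        rw [Finset.mem_Icc] at hj
        by_cases hA : j < m ∨ n < j
        · rw [if_pos hA, if_neg (by omega), mul_zero]
        · rw [if_neg hA]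
          by_cases hB : j < n
          · rw [if_pos hB, if_neg (by omega), mul_zero]
          · rw [if_neg hB, if_neg (by omega), mul_zero]
      · intro h; exact absurd (Finset.mem_Icc.mpr ⟨by omega, by omega⟩) h
    · rw [if_neg hc2, Finset.sum_eq_single (k-1)]
      · rw [if_neg (by omega), if_pos (by omega), if_pos (by omega), mul_one]
      · intro j hj hne
        rw [Finset.mem_Icc] at hj
        by_cases hA : j < m ∨ n < j
        · rw [if_pos hA, if_neg (by omega), mul_zero]
        · rw [if_neg hA]
          by_cases hB : j < n
          · rw [if_pos hB, if_neg (by omega), mul_zero]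
          · rw [if_neg hB, if_neg (by omega), mul_zero]
      · intro h; exact absurd (Finset.mem_Icc.mpr ⟨by omega, by omega⟩) h

/-- The witness sequence. -/
noncomputable def yfun (m n : ℕ) (x : ℕ → ℝ) (j : ℕ) : ℝ :=
  if j ≤ m then x j else if j ≤ n then x m * (3/5:ℝ)^(j-m) else x m * (3/5:ℝ)^(n-m) / 10

lemma yfun_le (m n : ℕ) (x : ℕ → ℝ) (j : ℕ) (h : j ≤ m) : yfun m n x j = x j := by
  rw [yfun, if_pos h]

lemma yfun_mid (m n : ℕ) (x : ℕ → ℝ) (j : ℕ) (h1 : m ≤ j) (h2 : j ≤ n) :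
    yfun m n x j = x m * (3/5:ℝ)^(j-m) := by
  rw [yfun]
  by_cases h : j ≤ m
  · have hjm : j = m := by omega
    subst hjm
    rw [if_pos le_rfl]
    simp
  · rw [if_neg h, if_pos h2]

lemma yfun_top (m n : ℕ) (x : ℕ → ℝ) (j : ℕ) (hmn : m ≤ n) (h : n < j) :
    yfun m n x j = x m * (3/5:ℝ)^(n-m) / 10 := by
  rw [yfun, if_neg (by omega), if_neg (by omega)]

set_option maxHeartbeats 1600000 in
/-- Lemma for type `B_ℓ`. For `w = s_m ⋯ s_{n-1}` (case `ε = 1`) or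
`w = s'_{m-1} s_m ⋯ s_{n-1}` (case `ε = -1`) and given `x_1 > ⋯ > x_m > 0` with
`x_{m-1} > 3x_m` if `m ≥ 2`, one can choose `x_{m+1} > ⋯ > x_{min(n+1,ℓ)} > 0` with
`x_n > 3x_{n+1}` if `n ≤ ℓ-1`, such that for every further choice
`x_{n+2} > ⋯ > x_ℓ > 0` with `x_{n+1} > x_{n+2}`, one has `⟨qx - wx, e_1⟩ > 0`,
`⟨qx - wx, e_i - e_{i+1}⟩ > 0` for all `1 ≤ i ≤ ℓ-1`, and
`⟨qx - wx, e_n - e_{n+1}⟩ > 2x_{n+1}` if `n ≤ ℓ-1`. -/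
theorem stmt_7 (ℓ : ℕ) (hℓ : 2 ≤ ℓ) (q : ℝ) (hq : 2 ≤ q)
    (m n : ℕ) (hm : 1 ≤ m) (hmn : m ≤ n) (hn : n ≤ ℓ)
    (ε : ℝ) (hε : ε = 1 ∨ ε = -1)
    (w : EuclideanSpace ℝ (Fin ℓ) →ₗ[ℝ] EuclideanSpace ℝ (Fin ℓ))
    (hw1 : ∀ j, m ≤ j → j + 1 ≤ n → w (E ℓ j) = E ℓ (j + 1))
    (hw2 : w (E ℓ n) = ε • E ℓ m)
    (hw3 : ∀ j, 1 ≤ j → j ≤ ℓ → (j < m ∨ n < j) → w (E ℓ j) = E ℓ j)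
    (x : ℕ → ℝ)
    (hx : ∀ j, 1 ≤ j → j < m → x (j + 1) < x j) (hxm : 0 < x m)
    (hx3 : 2 ≤ m → 3 * x m < x (m - 1)) :
    ∃ y : ℕ → ℝ,
      (∀ j, j ≤ m → y j = x j) ∧
      (∀ j, m ≤ j → j < min (n + 1) ℓ → y (j + 1) < y j) ∧
      0 < y (min (n + 1) ℓ) ∧
      (n + 1 ≤ ℓ → 3 * y (n + 1) < y n) ∧
      ∀ z : ℕ → ℝ,
        (∀ j, j ≤ min (n + 1) ℓ → z j = y j) →
        (∀ j, n + 1 ≤ j → j < ℓ → z (j + 1) < z j) →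
        0 < z ℓ →
        0 < ⟪q • vec ℓ z - w (vec ℓ z), E ℓ 1⟫ ∧
        (∀ i, 1 ≤ i → i + 1 ≤ ℓ →
          0 < ⟪q • vec ℓ z - w (vec ℓ z), E ℓ i - E ℓ (i + 1)⟫) ∧
        (n + 1 ≤ ℓ →
          2 * z (n + 1) < ⟪q • vec ℓ z - w (vec ℓ z), E ℓ n - E ℓ (n + 1)⟫) := by
  have hP : 0 < x m * (3/5:ℝ)^(n-m) := by positivity
  -- the general decrease of yfun
  have ydec : ∀ j, 1 ≤ j → j < min (n+1) ℓ → yfun m n x (j+1) < yfun m n x j := by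
    intro j hj1 hj2
    have hjn : j ≤ n := by omega
    by_cases hjm : j < m
    · rw [yfun_le m n x j (by omega), yfun_le m n x (j+1) (by omega)]
      exact hx j hj1 hjm
    · push_neg at hjm
      by_cases hjn' : j < n
      · rw [yfun_mid m n x j hjm hjn, yfun_mid m n x (j+1) (by omega) (by omega)]
        have he : j + 1 - m = (j - m) + 1 := by omega
        rw [he, pow_succ]
        have hp : 0 < x m * (3/5:ℝ)^(j-m) := by positivity
        nlinarith [hp]
      · have hjn2 : j = n := by omega
        rw [hjn2]
        rw [yfun_mid m n x n (by omega) le_rfl, yfun_top m n x (n+1) hmn (by omega)]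
        linarith [hP]
  refine ⟨yfun m n x, fun j hj => yfun_le m n x j hj, fun j hj1 hj2 => ydec j (by omega) hj2,
    ?_, ?_, ?_⟩
  · by_cases h : n + 1 ≤ ℓ
    · have he : min (n+1) ℓ = n + 1 := by omega
      rw [he, yfun_top m n x (n+1) hmn (by omega)]
      positivity
    · have he : min (n+1) ℓ = ℓ := by omega
      rw [he, yfun_mid m n x ℓ (by omega) (by omega)]
      positivity
  · intro h
    rw [yfun_top m n x (n+1) hmn (by omega), yfun_mid m n x n hmn le_rfl]
    linarith [hP]
  · intro z hz1 hz2 hz3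
    -- z is decreasing and positive throughout
    have zdec : ∀ j, 1 ≤ j → j < ℓ → z (j+1) < z j := by
      intro j hj1 hj2
      by_cases hc : j < min (n+1) ℓ
      · rw [hz1 j (by omega), hz1 (j+1) (by omega)]
        exact ydec j hj1 hc
      · exact hz2 j (by omega) hj2
    have zmono : ∀ a b : ℕ, 1 ≤ a → a ≤ b → b ≤ ℓ → z b ≤ z a := by
      intro a b ha hab hb
      induction b with
      | zero => exact absurd hab (by omega)
      | succ b ih =>
        rcases Nat.lt_or_ge a (b+1) with h | h
        · have h1 : z (b+1) < z b := zdec b (by omega) (by omega)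
          have h2 := ih (by omega) (by omega)
          linarith
        · have : a = b + 1 := by omega
          subst this
          exact le_rfl
    have zpos : ∀ j, 1 ≤ j → j ≤ ℓ → 0 < z j := fun j h1 h2 =>
      lt_of_lt_of_le hz3 (zmono j ℓ h1 h2 le_rfl)
    have hzx : ∀ j, 1 ≤ j → j ≤ m → z j = x j := by
      intro j h1 h2
      rw [hz1 j (by omega), yfun_le m n x j h2]
    -- inner product computations
    have key : ∀ k, 1 ≤ k → k ≤ ℓ → ⟪q • vec ℓ z - w (vec ℓ z), E ℓ k⟫ =
        q * z k - (if k < m ∨ n < k then z k else if k = m then ε * z n else z (k - 1)) := by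
      intro k h1 h2
      rw [inner_sub_left, real_inner_smul_left, inner_vec_E ℓ z k h1 h2,
        w_coord ℓ m n hm hmn hn ε w hw1 hw2 hw3 z k h1 h2]
    have key2 : ∀ i, 1 ≤ i → i + 1 ≤ ℓ → ⟪q • vec ℓ z - w (vec ℓ z), E ℓ i - E ℓ (i+1)⟫ =
        (q * z i - (if i < m ∨ n < i then z i else if i = m then ε * z n else z (i - 1))) -
        (q * z (i+1) - (if i+1 < m ∨ n < i+1 then z (i+1) else if i+1 = m then ε * z n else z i)) := by
      intro i h1 h2
      rw [inner_sub_right, key i h1 (by omega), key (i+1) (by omega) h2]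
      have he : i + 1 - 1 = i := by omega
      rw [he]
    -- the strong inequality at i = n
    have strongN : n + 1 ≤ ℓ → 2 * z (n+1) <
        (q * z n - (if n < m ∨ n < n then z n else if n = m then ε * z n else z (n - 1))) -
        (q * z (n+1) - (if n+1 < m ∨ n < n+1 then z (n+1) else if n+1 = m then ε * z n else z n)) := by
      intro h
      rw [if_neg (show ¬(n < m ∨ n < n) by omega),
        if_pos (show n + 1 < m ∨ n < n + 1 by omega)]
      have hzn1 : z (n+1) = x m * (3/5:ℝ)^(n-m) / 10 := by
        rw [hz1 (n+1) (by omega), yfun_top m n x (n+1) hmn (by omega)]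
      by_cases hnm : n = m
      · rw [if_pos hnm]
        have hzn : z n = x m := by rw [hzx n (by omega) (by omega), hnm]
        have he0 : n - m = 0 := by omega
        rw [he0] at hzn1
        simp only [pow_zero, mul_one] at hzn1
        rcases hε with h1 | h1 <;> subst h1 <;> rw [hzn, hzn1] <;>
          nlinarith [hxm, mul_nonneg (show (0:ℝ) ≤ q - 2 by linarith) hxm.le]
      · rw [if_neg hnm]
        have hzn : z n = x m * (3/5:ℝ)^(n-m) := by
          rw [hz1 n (by omega), yfun_mid m n x n hmn le_rfl]
        have hznm1 : z (n-1) = x m * (3/5:ℝ)^(n-1-m) := by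
          rw [hz1 (n-1) (by omega), yfun_mid m n x (n-1) (by omega) (by omega)]
        have he : n - m = (n - 1 - m) + 1 := by omega
        rw [hzn, hzn1, hznm1, he, pow_succ]
        have hQ : 0 < x m * (3/5:ℝ)^(n-1-m) := by positivity
        nlinarith [hQ, mul_nonneg (show (0:ℝ) ≤ q - 2 by linarith) hQ.le]
    -- the weak inequality for all i
    have weak : ∀ i, 1 ≤ i → i + 1 ≤ ℓ → 0 <
        (q * z i - (if i < m ∨ n < i then z i else if i = m then ε * z n else z (i - 1))) -
        (q * z (i+1) - (if i+1 < m ∨ n < i+1 then z (i+1) else if i+1 = m then ε * z n else z i)) := by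
      intro i h1 h2
      by_cases hin : i = n
      · have hs := strongN (by omega)
        have hp := zpos (n+1) (by omega) (by omega)
        rw [hin]
        linarith
      by_cases hca : i + 1 < m ∨ n < i
      · rw [if_pos (show i < m ∨ n < i by omega),
          if_pos (show i + 1 < m ∨ n < i + 1 by omega)]
        have hg := zdec i h1 (by omega)
        nlinarith [hg, mul_pos (show (0:ℝ) < q - 1 by linarith)
          (show (0:ℝ) < z i - z (i+1) by linarith)]
      by_cases hcb : i + 1 = m
      · rw [if_pos (show i < m ∨ n < i by omega),
          if_neg (show ¬(i + 1 < m ∨ n < i + 1) by omega), if_pos hcb]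
        have e1 : z i = x (m-1) := by
          rw [hzx i (by omega) (by omega)]
          congr 1
          omega
        have e2 : z (i+1) = x m := by
          rw [hzx (i+1) (by omega) (by omega), hcb]
        have h3 : 3 * x m < x (m-1) := hx3 (by omega)
        have hgap : 3 * z (i+1) < z i := by rw [e1, e2]; linarith
        have hznm : z n ≤ z (i+1) := zmono (i+1) n (by omega) (by omega) hn
        have hznp : 0 < z n := zpos n (by omega) (by omega)
        have hzip : 0 < z (i+1) := zpos (i+1) (by omega) (by omega)
        rcases hε with h' | h' <;> rw [h'] <;>
          nlinarith [hznm, hznp, hzip,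
            mul_pos (show (0:ℝ) < q - 1 by linarith)
              (show (0:ℝ) < z i - 3 * z (i+1) by linarith),
            mul_nonneg (show (0:ℝ) ≤ 2*q - 3 by linarith) hzip.le,
            mul_nonneg (show (0:ℝ) ≤ 2*q - 4 by linarith) hzip.le]
      by_cases hcc : i = m
      · -- i = m < n
        rw [if_neg (show ¬(i < m ∨ n < i) by omega), if_pos hcc,
          if_neg (show ¬(i + 1 < m ∨ n < i + 1) by omega),
          if_neg (show ¬(i + 1 = m) by omega)]
        have hg := zdec i h1 (by omega)
        have hznm : z n ≤ z (i+1) := zmono (i+1) n (by omega) (by omega) hn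
        have hznp : 0 < z n := zpos n (by omega) (by omega)
        rcases hε with h' | h' <;> rw [h'] <;>
          nlinarith [hg, hznm, hznp, mul_pos (show (0:ℝ) < q by linarith)
            (show (0:ℝ) < z i - z (i+1) by linarith)]
      · -- m < i < n
        rw [if_neg (show ¬(i < m ∨ n < i) by omega), if_neg hcc,
          if_neg (show ¬(i + 1 < m ∨ n < i + 1) by omega),
          if_neg (show ¬(i + 1 = m) by omega)]
        have hzi1 : z (i-1) = x m * (3/5:ℝ)^(i-1-m) := by
          rw [hz1 (i-1) (by omega), yfun_mid m n x (i-1) (by omega) (by omega)]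
        have hzi : z i = x m * (3/5:ℝ)^(i-m) := by
          rw [hz1 i (by omega), yfun_mid m n x i (by omega) (by omega)]
        have hzi2 : z (i+1) = x m * (3/5:ℝ)^(i+1-m) := by
          rw [hz1 (i+1) (by omega), yfun_mid m n x (i+1) (by omega) (by omega)]
        have he1 : i - m = (i - 1 - m) + 1 := by omega
        have he2 : i + 1 - m = (i - 1 - m) + 1 + 1 := by omega
        rw [hzi1, hzi, hzi2, he1, he2, pow_succ, pow_succ, pow_succ]
        have hQ : 0 < x m * (3/5:ℝ)^(i-1-m) := by positivity
        nlinarith [hQ, mul_nonneg (show (0:ℝ) ≤ q - 2 by linarith) hQ.le]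
    refine ⟨?_, ?_, ?_⟩
    · rw [key 1 le_rfl (by omega)]
      by_cases hm1 : m = 1
      · rw [if_neg (show ¬(1 < m ∨ n < 1) by omega), if_pos (show 1 = m by omega)]
        have h1 := zpos 1 le_rfl (by omega)
        have h2 : z n ≤ z 1 := zmono 1 n le_rfl (by omega) (by omega)
        have h3 : 0 < z n := zpos n (by omega) (by omega)
        rcases hε with h' | h' <;> rw [h'] <;> nlinarith [h1, h2, h3]
      · rw [if_pos (show 1 < m ∨ n < 1 by omega)]
        have h1 := zpos 1 le_rfl (by omega)
        nlinarith [h1]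
    · intro i h1 h2
      rw [key2 i h1 h2]
      exact weak i h1 h2
    · intro h
      rw [key2 n (by omega) h]
      exact strongN h
end

section
/- Let ℓ ≥ 2 and let q ≥ 2 be a real number. Let λ = (λ_1,…,λ_k) be a composition of ℓ, set m_i = λ_1+⋯+λ_{i−1}+1 and n_i = λ_1+⋯+λ_i, and let ε = (ε_1,…,ε_k) ∈ {+1,−1}^k. Let w = w_{λ,ε} : ℝ^ℓ → ℝ^ℓ be the linear map determined by w(e_j) = e_{j+1} for m_i ≤ j ≤ n_i−1 and w(e_{n_i}) = ε_i·e_{m_i}, for each 1 ≤ i ≤ k. Then there exists x = (x_1,…,x_ℓ) ∈ ℝ^ℓ with x_1 > x_2 > ⋯ > x_ℓ > 0 such that ⟨qx − wx, e_1⟩ > 0 and ⟨qx − wx, e_i − e_{i+1}⟩ > 0 for all 1 ≤ i ≤ ℓ−1. -/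
open scoped RealInnerProductSpace

namespace Stmt8

def S (lam : ℕ → ℕ) (i : ℕ) : ℕ := ∑ t ∈ Finset.Icc 1 i, lam t

lemma S_zero (lam : ℕ → ℕ) : S lam 0 = 0 := by simp [S]

lemma S_succ (lam : ℕ → ℕ) (i : ℕ) : S lam (i+1) = S lam i + lam (i+1) := by
  rw [S, S, Finset.sum_Icc_succ_top (by omega)]

lemma S_mono (lam : ℕ → ℕ) : Monotone (S lam) := fun _ _ hab =>
  Finset.sum_le_sum_of_subset (Finset.Icc_subset_Icc_right hab)

open Classical in
noncomputable def blk (lam : ℕ → ℕ) (j : ℕ) : ℕ :=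
  if h : ∃ i, j ≤ S lam i then Nat.find h else 0

lemma blk_spec (lam : ℕ → ℕ) {k ℓ : ℕ} (hsum : S lam k = ℓ) {j : ℕ} (h1 : 1 ≤ j) (h2 : j ≤ ℓ) :
    1 ≤ blk lam j ∧ blk lam j ≤ k ∧ S lam (blk lam j - 1) < j ∧ j ≤ S lam (blk lam j) := by
  have hex : ∃ i, j ≤ S lam i := ⟨k, by omega⟩
  classical
  simp only [blk, dif_pos hex]
  have hspec := Nat.find_spec hex
  have hle : Nat.find hex ≤ k := Nat.find_min' hex (by omega)
  have hpos : 1 ≤ Nat.find hex := by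
    by_contra h
    have h0 : Nat.find hex = 0 := by omega
    rw [h0, S_zero] at hspec; omega
  have hlt : ¬ (j ≤ S lam (Nat.find hex - 1)) := Nat.find_min hex (by omega)
  exact ⟨hpos, hle, by omega, hspec⟩

lemma blk_eq (lam : ℕ → ℕ) {k ℓ : ℕ} (hsum : S lam k = ℓ) {i j : ℕ} (hi1 : 1 ≤ i) (hik : i ≤ k)
    (hj1 : S lam (i-1) < j) (hj2 : j ≤ S lam i) : blk lam j = i := by
  have h1 : 1 ≤ j := by omega
  have h2 : j ≤ ℓ := le_trans hj2 (by rw [← hsum]; exact S_mono lam hik)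
  obtain ⟨b1, bk, blt, ble⟩ := blk_spec lam hsum h1 h2
  have hex : ∃ i', j ≤ S lam i' := ⟨k, by omega⟩
  have hble : blk lam j ≤ i := by
    classical
    simp only [blk, dif_pos hex]
    exact Nat.find_min' hex hj2
  by_contra hne
  have hlt2 : blk lam j ≤ i - 1 := by omega
  have := S_mono lam hlt2
  omega

lemma sum_parts {M : Type*} [AddCommMonoid M] (lam : ℕ → ℕ) (f : ℕ → M) (K : ℕ) :
    ∑ j ∈ Finset.Ioc 0 (S lam K), f j
      = ∑ i ∈ Finset.Icc 1 K, ∑ j ∈ Finset.Ioc (S lam (i-1)) (S lam i), f j := by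
  induction K with
  | zero => simp [S_zero]
  | succ n ih =>
      rw [Finset.sum_Icc_succ_top (by omega), ← ih, Nat.add_sub_cancel,
        ← Finset.sum_Ioc_consecutive f (Nat.zero_le _) (S_mono lam (Nat.le_succ n))]

lemma E_apply (ℓ j : ℕ) (h1 : 1 ≤ j) (h2 : j ≤ ℓ) (p : Fin ℓ) :
    E ℓ j p = if (p : ℕ) = j - 1 then 1 else 0 := by
  rw [E, dif_pos ⟨h1, h2⟩, EuclideanSpace.single_apply]
  simp [Fin.ext_iff]

lemma inner_E (ℓ : ℕ) (v : EuclideanSpace ℝ (Fin ℓ)) (a : ℕ) (h1 : 1 ≤ a) (h2 : a ≤ ℓ) :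
    ⟪v, E ℓ a⟫ = v ⟨a - 1, by omega⟩ := by
  rw [E, dif_pos ⟨h1, h2⟩, EuclideanSpace.inner_single_right]
  simp

attribute [irreducible] blk

noncomputable def xf (ℓ : ℕ) (lam : ℕ → ℕ) (j : ℕ) : ℝ :=
  ((3/4:ℝ)^ℓ/9)^(blk lam j) * (3/4:ℝ)^(j - 1 - S lam (blk lam j - 1))

lemma xf_pos (ℓ : ℕ) (lam : ℕ → ℕ) (j : ℕ) : 0 < xf ℓ lam j := by
  unfold xf; positivity

noncomputable def gf (ℓ : ℕ) (lam : ℕ → ℕ) (eps : ℕ → ℝ) (a : ℕ) : ℝ :=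
  if a = S lam (blk lam a - 1) + 1 then eps (blk lam a) * xf ℓ lam (S lam (blk lam a))
  else xf ℓ lam (a - 1)

lemma gf_eq_start (ℓ : ℕ) (lam : ℕ → ℕ) (eps : ℕ → ℝ) {k i a : ℕ} (hsum : S lam k = ℓ)
    (hi1 : 1 ≤ i) (hik : i ≤ k) (hlt : S lam (i-1) < S lam i) (ha : a = S lam (i-1) + 1) :
    gf ℓ lam eps a = eps i * xf ℓ lam (S lam i) := by
  have hblk : blk lam a = i := blk_eq lam hsum hi1 hik (by omega) (by omega)
  rw [gf, hblk, if_pos ha]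

lemma gf_eq_mid (ℓ : ℕ) (lam : ℕ → ℕ) (eps : ℕ → ℝ) {k i a : ℕ} (hsum : S lam k = ℓ)
    (hi1 : 1 ≤ i) (hik : i ≤ k) (h1 : S lam (i-1) + 2 ≤ a) (h2 : a ≤ S lam i) :
    gf ℓ lam eps a = xf ℓ lam (a - 1) := by
  have hblk : blk lam a = i := blk_eq lam hsum hi1 hik (by omega) h2
  rw [gf, hblk, if_neg (by omega)]

end Stmt8

set_option maxHeartbeats 4000000 in
/-- type `B_ℓ`. For a composition `λ` of `ℓ`, signs `ε_i ∈ {±1}`, and the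
signed block-cycle element `w = w_{λ,ε}`, there exists `x_1 > ⋯ > x_ℓ > 0` with
`⟨qx - wx, e_1⟩ > 0` and `⟨qx - wx, e_i - e_{i+1}⟩ > 0` for all `1 ≤ i ≤ ℓ-1`. -/
theorem stmt_8 (ℓ : ℕ) (hℓ : 2 ≤ ℓ) (q : ℝ) (hq : 2 ≤ q)
    (k : ℕ) (hk : 1 ≤ k) (lam : ℕ → ℕ)
    (hlam : ∀ i, 1 ≤ i → i ≤ k → 1 ≤ lam i)
    (hsum : ∑ j ∈ Finset.Icc 1 k, lam j = ℓ)
    (eps : ℕ → ℝ) (heps : ∀ i, 1 ≤ i → i ≤ k → eps i = 1 ∨ eps i = -1)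
    (w : EuclideanSpace ℝ (Fin ℓ) →ₗ[ℝ] EuclideanSpace ℝ (Fin ℓ))
    (hw : ∀ i, 1 ≤ i → i ≤ k →
      (∀ j, (∑ t ∈ Finset.Icc 1 (i - 1), lam t) + 1 ≤ j →
          j + 1 ≤ ∑ t ∈ Finset.Icc 1 i, lam t → w (E ℓ j) = E ℓ (j + 1)) ∧
      w (E ℓ (∑ t ∈ Finset.Icc 1 i, lam t))
        = eps i • E ℓ ((∑ t ∈ Finset.Icc 1 (i - 1), lam t) + 1)) :
    ∃ x : ℕ → ℝ,
      (∀ j, 1 ≤ j → j < ℓ → x (j + 1) < x j) ∧ 0 < x ℓ ∧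
      0 < ⟪q • vec ℓ x - w (vec ℓ x), E ℓ 1⟫ ∧
      (∀ i, 1 ≤ i → i + 1 ≤ ℓ →
        0 < ⟪q • vec ℓ x - w (vec ℓ x), E ℓ i - E ℓ (i + 1)⟫) := by
  classical
  have hsum' : Stmt8.S lam k = ℓ := hsum
  have hw1 : ∀ i, 1 ≤ i → i ≤ k → ∀ j, Stmt8.S lam (i-1) + 1 ≤ j → j + 1 ≤ Stmt8.S lam i →
      w (E ℓ j) = E ℓ (j+1) := fun i h1 h2 => (hw i h1 h2).1
  have hw2 : ∀ i, 1 ≤ i → i ≤ k →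
      w (E ℓ (Stmt8.S lam i)) = eps i • E ℓ (Stmt8.S lam (i-1) + 1) :=
    fun i h1 h2 => (hw i h1 h2).2
  have hS0 : Stmt8.S lam 0 = 0 := Stmt8.S_zero lam
  have hSstep : ∀ i, 1 ≤ i → i ≤ k → Stmt8.S lam (i-1) + lam i = Stmt8.S lam i := by
    intro i h1 h2
    have hi : i - 1 + 1 = i := by omega
    have := Stmt8.S_succ lam (i-1)
    rw [hi] at this
    omega
  have hSlt : ∀ i, 1 ≤ i → i ≤ k → Stmt8.S lam (i-1) < Stmt8.S lam i := by
    intro i h1 h2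
    have := hlam i h1 h2
    have := hSstep i h1 h2
    omega
  have hSle : ∀ i, i ≤ k → Stmt8.S lam i ≤ ℓ := fun i h => hsum' ▸ Stmt8.S_mono lam h
  -- numeric basics
  have hδ0 : (0:ℝ) < 3/4 := by norm_num
  have hβ0 : (0:ℝ) < (3/4:ℝ)^ℓ/9 := by positivity
  have hδpow_pos : ∀ n : ℕ, (0:ℝ) < (3/4:ℝ)^n := fun n => pow_pos hδ0 n
  have hδpow_le_one : ∀ n : ℕ, (3/4:ℝ)^n ≤ 1 := fun n => pow_le_one₀ (by norm_num) (by norm_num)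
  have hδpow_anti : ∀ m n : ℕ, m ≤ n → (3/4:ℝ)^n ≤ (3/4:ℝ)^m :=
    fun m n h => pow_le_pow_of_le_one (by norm_num) (by norm_num) h
  have hxin : ∀ i j, 1 ≤ i → i ≤ k → Stmt8.S lam (i-1) < j → j ≤ Stmt8.S lam i →
      Stmt8.xf ℓ lam j = ((3/4:ℝ)^ℓ/9)^i * (3/4:ℝ)^(j - 1 - Stmt8.S lam (i-1)) := by
    intro i j h1 h2 h3 h4
    rw [Stmt8.xf, Stmt8.blk_eq lam hsum' h1 h2 h3 h4]
  -- the vector as a sum of basis vectors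
  have hvec : vec ℓ (Stmt8.xf ℓ lam) = ∑ j ∈ Finset.Icc 1 ℓ, Stmt8.xf ℓ lam j • E ℓ j := by
    ext p
    have h1 : ∀ b ∈ Finset.Icc 1 ℓ, b ≠ (p:ℕ)+1 → Stmt8.xf ℓ lam b * (E ℓ b) p = 0 := by
      intro b hb hne
      rw [Finset.mem_Icc] at hb
      rw [Stmt8.E_apply ℓ b hb.1 hb.2, if_neg (by omega), mul_zero]
    have h2 : ((p:ℕ)+1) ∉ Finset.Icc 1 ℓ → Stmt8.xf ℓ lam ((p:ℕ)+1) * (E ℓ ((p:ℕ)+1)) p = 0 := by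
      intro h
      exact absurd (Finset.mem_Icc.mpr ⟨by omega, by omega⟩) h
    calc (vec ℓ (Stmt8.xf ℓ lam)) p
        = Stmt8.xf ℓ lam ((p:ℕ)+1) * (E ℓ ((p:ℕ)+1)) p := by
          rw [Stmt8.E_apply ℓ _ (by omega) (by omega), if_pos (by omega), mul_one]
          rfl
      _ = ∑ j ∈ Finset.Icc 1 ℓ, Stmt8.xf ℓ lam j * (E ℓ j) p :=
          (Finset.sum_eq_single _ h1 h2).symm
      _ = (∑ j ∈ Finset.Icc 1 ℓ, Stmt8.xf ℓ lam j • E ℓ j) p := by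
          rw [WithLp.ofLp_sum, Finset.sum_apply]
          exact Finset.sum_congr rfl fun c _ => rfl
  -- image under w
  have hwx : w (vec ℓ (Stmt8.xf ℓ lam)) =
      ∑ i ∈ Finset.Icc 1 k,
        ((∑ j ∈ Finset.Ioc (Stmt8.S lam (i-1)) (Stmt8.S lam i - 1),
            Stmt8.xf ℓ lam j • E ℓ (j+1))
          + (eps i * Stmt8.xf ℓ lam (Stmt8.S lam i)) • E ℓ (Stmt8.S lam (i-1) + 1)) := by
    rw [hvec, map_sum]
    simp_rw [map_smul]
    have hIcc : Finset.Icc 1 ℓ = Finset.Ioc 0 (Stmt8.S lam k) := by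
      rw [hsum', ← Finset.Icc_add_one_left_eq_Ioc, zero_add]
    rw [hIcc, Stmt8.sum_parts]
    refine Finset.sum_congr rfl ?_
    intro i hi
    rw [Finset.mem_Icc] at hi
    have hlt := hSlt i hi.1 hi.2
    have hSi : Stmt8.S lam i = (Stmt8.S lam i - 1) + 1 := by omega
    conv_lhs => rw [hSi]
    rw [Finset.sum_Ioc_succ_top (by omega), ← hSi]
    congr 1
    · refine Finset.sum_congr rfl ?_
      intro j hj
      rw [Finset.mem_Ioc] at hj
      rw [hw1 i hi.1 hi.2 j (by omega) (by omega)]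
    · rw [hw2 i hi.1 hi.2, smul_smul, mul_comm]
  -- inner products of basis vectors
  have hEE : ∀ a b, 1 ≤ a → a ≤ ℓ → 1 ≤ b → b ≤ ℓ →
      ⟪E ℓ b, E ℓ a⟫ = if b = a then (1:ℝ) else 0 := by
    intro a b ha1 ha2 hb1 hb2
    rw [Stmt8.inner_E ℓ _ a ha1 ha2, Stmt8.E_apply ℓ b hb1 hb2]
    show (if a - 1 = b - 1 then (1:ℝ) else 0) = _
    split_ifs <;> first | rfl | omega
  -- coordinates of w x
  have hcomp : ∀ a, 1 ≤ a → a ≤ ℓ →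
      ⟪w (vec ℓ (Stmt8.xf ℓ lam)), E ℓ a⟫ = Stmt8.gf ℓ lam eps a := by
    intro a ha1 ha2
    obtain ⟨hb1, hbk, hblt, hble⟩ := Stmt8.blk_spec lam hsum' ha1 ha2
    rw [hwx, sum_inner]
    have hterm : ∀ i ∈ Finset.Icc 1 k,
        ⟪(∑ j ∈ Finset.Ioc (Stmt8.S lam (i-1)) (Stmt8.S lam i - 1),
            Stmt8.xf ℓ lam j • E ℓ (j+1))
          + (eps i * Stmt8.xf ℓ lam (Stmt8.S lam i)) • E ℓ (Stmt8.S lam (i-1) + 1), E ℓ a⟫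
        = (∑ j ∈ Finset.Ioc (Stmt8.S lam (i-1)) (Stmt8.S lam i - 1),
            Stmt8.xf ℓ lam j * ⟪E ℓ (j+1), E ℓ a⟫)
          + (eps i * Stmt8.xf ℓ lam (Stmt8.S lam i))
            * ⟪E ℓ (Stmt8.S lam (i-1) + 1), E ℓ a⟫ := by
      intro i _
      rw [inner_add_left, sum_inner, real_inner_smul_left]
      refine congrArg (· + _) (Finset.sum_congr rfl fun c _ => ?_)
      exact real_inner_smul_left _ _ _
    rw [Finset.sum_congr rfl hterm]
    refine (Finset.sum_eq_single (Stmt8.blk lam a) ?_ ?_).trans ?_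
    · -- other blocks contribute zero
      intro i hi hine
      rw [Finset.mem_Icc] at hi
      show (∑ j ∈ Finset.Ioc (Stmt8.S lam (i-1)) (Stmt8.S lam i - 1),
            Stmt8.xf ℓ lam j * ⟪E ℓ (j+1), E ℓ a⟫)
          + (eps i * Stmt8.xf ℓ lam (Stmt8.S lam i))
            * ⟪E ℓ (Stmt8.S lam (i-1) + 1), E ℓ a⟫ = 0
      have hlt := hSlt i hi.1 hi.2
      have hle := hSle i hi.2
      have hzero1 : ∑ j ∈ Finset.Ioc (Stmt8.S lam (i-1)) (Stmt8.S lam i - 1),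
          Stmt8.xf ℓ lam j * ⟪E ℓ (j+1), E ℓ a⟫ = 0 := by
        refine Finset.sum_eq_zero ?_
        intro j hj
        rw [Finset.mem_Ioc] at hj
        rw [hEE a (j+1) ha1 ha2 (by omega) (by omega), if_neg ?_, mul_zero]
        intro hcon
        have : Stmt8.blk lam a = i := Stmt8.blk_eq lam hsum' hi.1 hi.2 (by omega) (by omega)
        exact hine this.symm
      have hzero2 : ⟪E ℓ (Stmt8.S lam (i-1) + 1), E ℓ a⟫ = (0:ℝ) := by
        rw [hEE a _ ha1 ha2 (by omega) (by omega), if_neg ?_]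
        intro hcon
        have : Stmt8.blk lam a = i := Stmt8.blk_eq lam hsum' hi.1 hi.2 (by omega) (by omega)
        exact hine this.symm
      rw [hzero1, hzero2, mul_zero, zero_add]
    · intro hnot
      exact absurd (Finset.mem_Icc.mpr ⟨hb1, hbk⟩) hnot
    · -- the main block
      show (∑ j ∈ Finset.Ioc (Stmt8.S lam (Stmt8.blk lam a - 1))
            (Stmt8.S lam (Stmt8.blk lam a) - 1), Stmt8.xf ℓ lam j * ⟪E ℓ (j+1), E ℓ a⟫)
          + (eps (Stmt8.blk lam a) * Stmt8.xf ℓ lam (Stmt8.S lam (Stmt8.blk lam a)))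
            * ⟪E ℓ (Stmt8.S lam (Stmt8.blk lam a - 1) + 1), E ℓ a⟫ = Stmt8.gf ℓ lam eps a
      have hlt := hSlt (Stmt8.blk lam a) hb1 hbk
      have hle := hSle (Stmt8.blk lam a) hbk
      by_cases hstart : a = Stmt8.S lam (Stmt8.blk lam a - 1) + 1
      · have hzero : ∑ j ∈ Finset.Ioc (Stmt8.S lam (Stmt8.blk lam a - 1))
            (Stmt8.S lam (Stmt8.blk lam a) - 1), Stmt8.xf ℓ lam j * ⟪E ℓ (j+1), E ℓ a⟫ = 0 := by
          refine Finset.sum_eq_zero ?_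
          intro j hj
          rw [Finset.mem_Ioc] at hj
          rw [hEE a (j+1) ha1 ha2 (by omega) (by omega), if_neg (by omega), mul_zero]
        rw [hzero, zero_add, hEE a _ ha1 ha2 (by omega) (by omega), if_pos (by omega), mul_one]
        rw [Stmt8.gf, if_pos hstart]
      · have hmain : ∑ j ∈ Finset.Ioc (Stmt8.S lam (Stmt8.blk lam a - 1))
            (Stmt8.S lam (Stmt8.blk lam a) - 1), Stmt8.xf ℓ lam j * ⟪E ℓ (j+1), E ℓ a⟫
            = Stmt8.xf ℓ lam (a-1) := by
          rw [Finset.sum_eq_single (a-1)]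
          · rw [hEE a _ ha1 ha2 (by omega) (by omega), if_pos (by omega), mul_one]
          · intro b hb hbne
            rw [Finset.mem_Ioc] at hb
            rw [hEE a (b+1) ha1 ha2 (by omega) (by omega), if_neg (by omega), mul_zero]
          · intro hnot
            exact absurd (Finset.mem_Ioc.mpr ⟨by omega, by omega⟩) hnot
        rw [hmain, hEE a _ ha1 ha2 (by omega) (by omega), if_neg (by omega), mul_zero, add_zero]
        rw [Stmt8.gf, if_neg hstart]
  -- coordinates of q x - w x
  have hy : ∀ a, 1 ≤ a → a ≤ ℓ →
      ⟪q • vec ℓ (Stmt8.xf ℓ lam) - w (vec ℓ (Stmt8.xf ℓ lam)), E ℓ a⟫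
        = q * Stmt8.xf ℓ lam a - Stmt8.gf ℓ lam eps a := by
    intro a h1 h2
    rw [inner_sub_left, real_inner_smul_left, hcomp a h1 h2, Stmt8.inner_E ℓ _ a h1 h2]
    have hva : (vec ℓ (Stmt8.xf ℓ lam)) ⟨a - 1, by omega⟩ = Stmt8.xf ℓ lam a := by
      show Stmt8.xf ℓ lam (a - 1 + 1) = Stmt8.xf ℓ lam a
      congr 1
      omega
    rw [hva]
  refine ⟨Stmt8.xf ℓ lam, ?_, Stmt8.xf_pos ℓ lam ℓ, ?_, ?_⟩
  · -- strictly decreasing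
    intro j hj1 hj2
    obtain ⟨hb1, hbk, hblt, hble⟩ := Stmt8.blk_spec lam hsum' hj1 (le_of_lt hj2)
    by_cases hc : j + 1 ≤ Stmt8.S lam (Stmt8.blk lam j)
    · rw [hxin _ j hb1 hbk hblt hble, hxin _ (j+1) hb1 hbk (by omega) hc]
      have he : (j+1) - 1 - Stmt8.S lam (Stmt8.blk lam j - 1)
          = (j - 1 - Stmt8.S lam (Stmt8.blk lam j - 1)) + 1 := by omega
      rw [he, pow_succ]
      have h1 : (0:ℝ) < ((3/4:ℝ)^ℓ/9)^(Stmt8.blk lam j) := pow_pos hβ0 _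
      have h2 : (0:ℝ) < (3/4:ℝ)^(j - 1 - Stmt8.S lam (Stmt8.blk lam j - 1)) := hδpow_pos _
      nlinarith
    · have hji : j = Stmt8.S lam (Stmt8.blk lam j) := by omega
      have hik : Stmt8.blk lam j < k := by
        by_contra h
        have hek : Stmt8.blk lam j = k := by omega
        rw [hek, hsum'] at hji
        omega
      have hs2 : Stmt8.S lam (Stmt8.blk lam j) < Stmt8.S lam (Stmt8.blk lam j + 1) := by
        have := hSlt (Stmt8.blk lam j + 1) (by omega) (by omega)
        simpa using this
      have hx1 : Stmt8.xf ℓ lam (j+1)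
          = ((3/4:ℝ)^ℓ/9)^(Stmt8.blk lam j + 1) := by
        have := hxin (Stmt8.blk lam j + 1) (j+1) (by omega) (by omega)
          (by simpa using (by omega : Stmt8.S lam (Stmt8.blk lam j) < j + 1))
          (by omega)
        rw [this]
        have he : (j+1) - 1 - Stmt8.S lam (Stmt8.blk lam j + 1 - 1) = 0 := by
          have h' : Stmt8.S lam (Stmt8.blk lam j + 1 - 1) = Stmt8.S lam (Stmt8.blk lam j) := by
            norm_num
          omega
        rw [he, pow_zero, mul_one]
      rw [hx1, hxin _ j hb1 hbk hblt hble, pow_succ]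
      have he : j - 1 - Stmt8.S lam (Stmt8.blk lam j - 1) ≤ ℓ := by omega
      have h1 : (0:ℝ) < ((3/4:ℝ)^ℓ/9)^(Stmt8.blk lam j) := pow_pos hβ0 _
      have h2 := hδpow_anti _ ℓ he
      have h3 := hδpow_pos (j - 1 - Stmt8.S lam (Stmt8.blk lam j - 1))
      have h4 := hδpow_pos ℓ
      nlinarith
  · -- first coordinate
    rw [hy 1 (by omega) (by omega)]
    have hl1 : Stmt8.S lam 0 < Stmt8.S lam 1 := by
      have := hSlt 1 le_rfl hk
      simpa using this
    have hg : Stmt8.gf ℓ lam eps 1 = eps 1 * Stmt8.xf ℓ lam (Stmt8.S lam 1) :=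
      Stmt8.gf_eq_start ℓ lam eps (k := k) (i := 1) (a := 1) hsum' le_rfl hk
        (by rw [show (1:ℕ)-1 = 0 from rfl]; exact hl1) (by rw [show (1:ℕ)-1 = 0 from rfl, hS0])
    rw [hg, hxin 1 1 le_rfl hk (by rw [show (1:ℕ)-1 = 0 from rfl, hS0]; omega) (by
        rw [hS0] at hl1
        omega),
      hxin 1 (Stmt8.S lam 1) le_rfl hk (by rw [show (1:ℕ)-1 = 0 from rfl]; exact hl1) le_rfl]
    have h1 : (0:ℝ) < ((3/4:ℝ)^ℓ/9)^1 := pow_pos hβ0 1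
    have he0 : (1:ℕ) - 1 - Stmt8.S lam (1-1) = 0 := by simp
    rw [he0, pow_zero, mul_one]
    have h2 := hδpow_pos (Stmt8.S lam 1 - 1 - Stmt8.S lam (1-1))
    have h3 := hδpow_le_one (Stmt8.S lam 1 - 1 - Stmt8.S lam (1-1))
    rcases heps 1 le_rfl hk with h | h <;> rw [h] <;> nlinarith
  · -- root inequalities
    intro a ha1 ha2
    rw [inner_sub_right, hy a ha1 (by omega), hy (a+1) (by omega) ha2]
    obtain ⟨hb1, hbk, hblt, hble⟩ := Stmt8.blk_spec lam hsum' ha1 (by omega)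
    set i := Stmt8.blk lam a with hidef
    clear_value i
    clear hidef
    have hBpos : (0:ℝ) < ((3/4:ℝ)^ℓ/9)^i := pow_pos hβ0 i
    by_cases hc : a + 1 ≤ Stmt8.S lam i
    · -- a and a+1 in the same block
      have hga1 : Stmt8.gf ℓ lam eps (a+1) = Stmt8.xf ℓ lam a := by
        have h := Stmt8.gf_eq_mid ℓ lam eps (k := k) (i := i) (a := a+1) hsum' hb1 hbk
          (by omega) hc
        simpa using h
      rw [hga1]
      by_cases hstart : a = Stmt8.S lam (i-1) + 1
      · have hga : Stmt8.gf ℓ lam eps a = eps i * Stmt8.xf ℓ lam (Stmt8.S lam i) :=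
          Stmt8.gf_eq_start ℓ lam eps (k := k) (i := i) (a := a) hsum' hb1 hbk (hSlt i hb1 hbk) hstart
        rw [hga, hxin i a hb1 hbk hblt hble, hxin i (a+1) hb1 hbk (by omega) hc,
          hxin i (Stmt8.S lam i) hb1 hbk (hSlt i hb1 hbk) le_rfl]
        have he0 : a - 1 - Stmt8.S lam (i-1) = 0 := by omega
        have he1 : (a+1) - 1 - Stmt8.S lam (i-1) = 1 := by omega
        rw [he0, he1, pow_zero, pow_one, mul_one]
        have h2 := hδpow_pos (Stmt8.S lam i - 1 - Stmt8.S lam (i-1))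
        have h3 := hδpow_le_one (Stmt8.S lam i - 1 - Stmt8.S lam (i-1))
        clear hga hga1 hw hw1 hw2 hvec hwx hcomp hEE hy w hxin
        rcases heps i hb1 hbk with h | h <;> rw [h] <;> nlinarith
      · have hga : Stmt8.gf ℓ lam eps a = Stmt8.xf ℓ lam (a-1) :=
          Stmt8.gf_eq_mid ℓ lam eps (k := k) (i := i) (a := a) hsum' hb1 hbk (by omega) hble
        rw [hga, hxin i a hb1 hbk hblt hble, hxin i (a+1) hb1 hbk (by omega) hc,
          hxin i (a-1) hb1 hbk (by omega) (by omega)]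
        have he1 : a - 1 - Stmt8.S lam (i-1) = (a - 2 - Stmt8.S lam (i-1)) + 1 := by omega
        have he2 : (a+1) - 1 - Stmt8.S lam (i-1) = (a - 2 - Stmt8.S lam (i-1)) + 2 := by omega
        have he3 : (a-1) - 1 - Stmt8.S lam (i-1) = a - 2 - Stmt8.S lam (i-1) := by omega
        rw [he1, he2, he3, pow_succ, pow_succ, pow_succ]
        have h2 := hδpow_pos (a - 2 - Stmt8.S lam (i-1))
        nlinarith [mul_pos hBpos h2,
          mul_le_mul_of_nonneg_left hq (le_of_lt (mul_pos hBpos h2))]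
    · -- a is the last element of block i; a+1 starts block i+1
      have hja : a = Stmt8.S lam i := by omega
      have hik : i < k := by
        by_contra h
        have hek : i = k := by omega
        rw [hek, hsum'] at hja
        omega
      have hi1sub : Stmt8.S lam (i + 1 - 1) = Stmt8.S lam i := by norm_num
      have hs2 : Stmt8.S lam i < Stmt8.S lam (i + 1) := by
        have := hSlt (i+1) (by omega) (by omega)
        rwa [hi1sub] at this
      have hga1 : Stmt8.gf ℓ lam eps (a+1)
          = eps (i+1) * Stmt8.xf ℓ lam (Stmt8.S lam (i+1)) :=
        Stmt8.gf_eq_start ℓ lam eps (k := k) (i := i+1) (a := a+1) hsum' (by omega) (by omega)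
          (by rwa [hi1sub]) (by rw [hi1sub]; omega)
      have hx1 : Stmt8.xf ℓ lam (a+1) = ((3/4:ℝ)^ℓ/9)^(i+1) := by
        rw [hxin (i+1) (a+1) (by omega) (by omega) (by rw [hi1sub]; omega) (by omega)]
        have he : (a+1) - 1 - Stmt8.S lam (i+1-1) = 0 := by
          rw [hi1sub]; omega
        rw [he, pow_zero, mul_one]
      have hx2 : Stmt8.xf ℓ lam (Stmt8.S lam (i+1))
          = ((3/4:ℝ)^ℓ/9)^(i+1)
            * (3/4:ℝ)^(Stmt8.S lam (i+1) - 1 - Stmt8.S lam i) := by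
        rw [hxin (i+1) (Stmt8.S lam (i+1)) (by omega) (by omega) (by rw [hi1sub]; omega) le_rfl,
          hi1sub]
      rw [hga1, hx1, hx2, pow_succ]
      have hE2pos := hδpow_pos (Stmt8.S lam (i+1) - 1 - Stmt8.S lam i)
      have hE2le := hδpow_le_one (Stmt8.S lam (i+1) - 1 - Stmt8.S lam i)
      have hDpos := hδpow_pos ℓ
      have hDle := hδpow_le_one ℓ
      by_cases hstart : a = Stmt8.S lam (i-1) + 1
      · -- block i is a singleton: lam i = 1
        have hga : Stmt8.gf ℓ lam eps a = eps i * Stmt8.xf ℓ lam (Stmt8.S lam i) :=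
          Stmt8.gf_eq_start ℓ lam eps (k := k) (i := i) (a := a) hsum' hb1 hbk (hSlt i hb1 hbk) hstart
        have hxa : Stmt8.xf ℓ lam a = ((3/4:ℝ)^ℓ/9)^i := by
          rw [hxin i a hb1 hbk hblt hble]
          have he : a - 1 - Stmt8.S lam (i-1) = 0 := by omega
          rw [he, pow_zero, mul_one]
        rw [hga, ← hja, hxa]
        have hE3pos := hδpow_pos (Stmt8.S lam (i+1) - 1 - a)
        have hE3le := hδpow_le_one (Stmt8.S lam (i+1) - 1 - a)
        have hXD : ((3/4:ℝ)^ℓ/9)^i * (3/4:ℝ)^ℓ ≤ ((3/4:ℝ)^ℓ/9)^i * 1 :=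
          mul_le_mul_of_nonneg_left hDle (le_of_lt hBpos)
        have hXDE : ((3/4:ℝ)^ℓ/9)^i * (3/4:ℝ)^ℓ * (3/4:ℝ)^(Stmt8.S lam (i+1) - 1 - a)
            ≤ ((3/4:ℝ)^ℓ/9)^i * (3/4:ℝ)^ℓ * 1 :=
          mul_le_mul_of_nonneg_left hE3le (le_of_lt (mul_pos hBpos hDpos))
        have hqX : ((3/4:ℝ)^ℓ/9)^i * 2 ≤ ((3/4:ℝ)^ℓ/9)^i * q :=
          mul_le_mul_of_nonneg_left hq (le_of_lt hBpos)
        have hqXD : q * (((3/4:ℝ)^ℓ/9)^i * (3/4:ℝ)^ℓ) ≤ q * (((3/4:ℝ)^ℓ/9)^i * 1) :=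
          mul_le_mul_of_nonneg_left hXD (by linarith)
        rcases heps i hb1 hbk with h | h <;>
          rcases heps (i+1) (by omega) (by omega) with h' | h' <;>
          rw [h, h'] <;>
          nlinarith [mul_pos hBpos hDpos, mul_pos (mul_pos hBpos hDpos) hE3pos,
            hXD, hXDE, hqX, hqXD, hBpos]
      · -- a is a non-initial element of block i
        have hga : Stmt8.gf ℓ lam eps a = Stmt8.xf ℓ lam (a-1) :=
          Stmt8.gf_eq_mid ℓ lam eps (k := k) (i := i) (a := a) hsum' hb1 hbk (by omega) hble
        rw [hga, hxin i a hb1 hbk hblt hble, hxin i (a-1) hb1 hbk (by omega) (by omega)]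
        have he1 : a - 1 - Stmt8.S lam (i-1) = (a - 2 - Stmt8.S lam (i-1)) + 1 := by omega
        have he3 : (a-1) - 1 - Stmt8.S lam (i-1) = a - 2 - Stmt8.S lam (i-1) := by omega
        rw [he1, he3, pow_succ]
        have hu_pos := hδpow_pos (a - 2 - Stmt8.S lam (i-1))
        have hu_ge : (3/4:ℝ)^ℓ ≤ (3/4:ℝ)^(a - 2 - Stmt8.S lam (i-1)) :=
          hδpow_anti _ ℓ (by omega)
        rcases heps (i+1) (by omega) (by omega) with h' | h' <;>
          rw [h'] <;>
          nlinarith [mul_pos hBpos hDpos, mul_pos (mul_pos hBpos hDpos) hE2pos,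
            mul_le_of_le_one_right (le_of_lt (mul_pos hBpos hDpos)) hE2le,
            mul_le_mul_of_nonneg_left hu_ge (le_of_lt hBpos),
            mul_pos hBpos hu_pos, mul_pos (mul_pos hBpos hu_pos) hE2pos]
end
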